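/- arXiv:2006.06847 — 4 statements merged into one kernel-verified Lean document; each statement's English description precedes it below -/
import Mathlib

section
/- For each m ∈ ℕ, the maps F_{m,n} : Γ → Γ_m converge uniformly to F_m : Γ → Γ_m as n → ∞; that is, for every ε > 0 there exists N such that for all n ≥ N and all x ∈ 𝕊, d_m(F_{m,n}(x), F_m(x)) < ε. -/
noncomputable section

instance : Fact ((0 : ℝ) < 1) := ⟨one_pos⟩

/-- The closed dyadic arc of level `n` and index `j` in the circle `𝕊 = [0,1]/{0,1}`,
realized as `AddCircle (1 : ℝ)`: the image of `[j/2^n, (j+1)/2^n]`. -/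
def dyadicArc (n j : ℕ) : Set (AddCircle (1 : ℝ)) :=
  (fun r : ℝ => (r : AddCircle (1 : ℝ))) '' Set.Icc ((j : ℝ) / 2 ^ n) (((j : ℝ) + 1) / 2 ^ n)

/-- The left endpoint of the dyadic arc of level `n` and index `j`. -/
def leftPt (n j : ℕ) : AddCircle (1 : ℝ) := (((j : ℝ) / 2 ^ n : ℝ) : AddCircle (1 : ℝ))

/-- The right endpoint of the dyadic arc of level `n` and index `j`. -/
def rightPt (n j : ℕ) : AddCircle (1 : ℝ) := ((((j : ℝ) + 1) / 2 ^ n : ℝ) : AddCircle (1 : ℝ))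

/-- `Δ` (given as a function of the level `n` and the index `j < 2^n` of a dyadic arc) is a
dyadic diameter function of type `𝒮₁`: `Δ(𝕊) = 1`, `Δ` is positive, the two children of any
dyadic arc have equal `Δ`-value, which is either half of or equal to that of their parent,
and `max {Δ(I) : I ∈ ℐ_n} → 0` as `n → ∞`. -/
def IsS1 (Δ : ℕ → ℕ → ℝ) : Prop :=
  Δ 0 0 = 1 ∧
  (∀ n j : ℕ, j < 2 ^ n → 0 < Δ n j) ∧
  (∀ n j : ℕ, j < 2 ^ n → Δ (n + 1) (2 * j) = Δ (n + 1) (2 * j + 1) ∧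
    (Δ (n + 1) (2 * j) = Δ n j / 2 ∨ Δ (n + 1) (2 * j) = Δ n j)) ∧
  (∀ ε : ℝ, 0 < ε → ∃ N : ℕ, ∀ n ≥ N, ∀ j < 2 ^ n, Δ n j < ε)

/-- `c` is a chain of dyadic arcs (given by level-index pairs) joining `x` to `y`:
all indices are valid, the union of the arcs is connected, and it contains `x` and `y`. -/
def IsDyadicChain (N : ℕ) (c : Fin (N + 1) → ℕ × ℕ) (x y : AddCircle (1 : ℝ)) : Prop :=
  (∀ k, (c k).2 < 2 ^ (c k).1) ∧
  IsConnected (⋃ k, dyadicArc (c k).1 (c k).2) ∧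
  x ∈ ⋃ k, dyadicArc (c k).1 (c k).2 ∧ y ∈ ⋃ k, dyadicArc (c k).1 (c k).2

/-- The set of sums `Σ Δ'(J_k)` over all chains of dyadic arcs joining `x` and `y`. -/
def chainSums (Δ' : ℕ → ℕ → ℝ) (x y : AddCircle (1 : ℝ)) : Set ℝ :=
  {s | ∃ (N : ℕ) (c : Fin (N + 1) → ℕ × ℕ), IsDyadicChain N c x y ∧
    s = ∑ k, Δ' (c k).1 (c k).2}

/-- The distance associated to a weight `Δ'` on dyadic arcs:
`d(x,y) = inf Σ Δ'(J_k)` over all chains of dyadic arcs joining `x` and `y`. -/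
def dOf (Δ' : ℕ → ℕ → ℝ) (x y : AddCircle (1 : ℝ)) : ℝ := sInf (chainSums Δ' x y)

/-- The truncation `Δ_n` of `Δ`: `Δ_n(I) = Δ(I)` for arcs of level `≤ n`, and
`Δ_n(I) = ½ Δ_n(parent of I)` for arcs of level `> n`. -/
def trunc (Δ : ℕ → ℕ → ℝ) (n : ℕ) : ℕ → ℕ → ℝ := fun m j =>
  if m ≤ n then Δ m j else Δ n (j / 2 ^ (m - n)) / 2 ^ (m - n)

/-- A chain of dyadic arcs is minimal if the arcs have pairwise disjoint interiors and no
union of at least two distinct arcs from the chain equals a dyadic arc. -/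
def IsMinimalChain (N : ℕ) (c : Fin (N + 1) → ℕ × ℕ) : Prop :=
  (∀ k l : Fin (N + 1), k ≠ l →
    interior (dyadicArc (c k).1 (c k).2) ∩ interior (dyadicArc (c l).1 (c l).2) = ∅) ∧
  (∀ T : Finset (Fin (N + 1)), 2 ≤ T.card →
    ¬∃ m j : ℕ, j < 2 ^ m ∧ (⋃ k ∈ T, dyadicArc (c k).1 (c k).2) = dyadicArc m j)

/-- The piecewise-linear folding of `[0,1]`: it maps `[0,1/4]` onto `[0,1/2]`,
`[1/4,3/8]` onto `[1/2,3/4]`, `[3/8,1/2]` onto `[1/2,3/4]` reversing orientation,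
`[1/2,5/8]` onto `[1/4,1/2]` reversing orientation, `[5/8,3/4]` onto `[1/4,1/2]`,
and `[3/4,1]` onto `[1/2,1]`, each piece linearly. -/
def foldPhi (t : ℝ) : ℝ :=
  if t ≤ 3 / 8 then 2 * t else if t ≤ 5 / 8 then 3 / 2 - 2 * t else 2 * t - 1

/-- The canonical representative in `[0,1)` of a point of the circle. -/
def circRep (x : AddCircle (1 : ℝ)) : ℝ := ((AddCircle.equivIco 1 0) x).1

/-- The map `f_n : 𝕊 → 𝕊`: on each dyadic arc `I` of level `n`, it is the identity if the
children of `I` have `Δ`-value half that of `I`, and the folding map of `I` if the children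
have `Δ`-value equal to that of `I`. -/
def foldMap (Δ : ℕ → ℕ → ℝ) (n : ℕ) (x : AddCircle (1 : ℝ)) : AddCircle (1 : ℝ) :=
  let t : ℝ := circRep x
  let j : ℕ := ⌊t * 2 ^ n⌋₊
  if Δ (n + 1) (2 * j) = Δ n j then
    (((((j : ℝ) + foldPhi (t * 2 ^ n - (j : ℝ))) / 2 ^ n) : ℝ) : AddCircle (1 : ℝ))
  else x

/-- The composition `F_{m,n} = f_m ∘ f_{m+1} ∘ ⋯ ∘ f_n` (the identity if `n < m`). -/
def Fchain (Δ : ℕ → ℕ → ℝ) (m : ℕ) : ℕ → AddCircle (1 : ℝ) → AddCircle (1 : ℝ)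
  | 0 => if m = 0 then foldMap Δ 0 else id
  | n + 1 => if m ≤ n then Fchain Δ m n ∘ foldMap Δ (n + 1)
      else if m = n + 1 then foldMap Δ (n + 1) else id

/-- The set `𝒟_k` of dyadic points of level `k` in the circle. -/
def Dpts (k : ℕ) : Set (AddCircle (1 : ℝ)) :=
  {x | ∃ j : ℕ, x = (((j : ℝ) / 2 ^ k : ℝ) : AddCircle (1 : ℝ))}

/-- The set `𝒟 = ⋃ k, 𝒟_k` of all dyadic points of the circle. -/
def DptsAll : Set (AddCircle (1 : ℝ)) := ⋃ k, Dpts k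

/-- `F` is the map `F_m : Γ → Γ_m`: it is `1`-Lipschitz from `d_Δ` to `d_m` and agrees on
dyadic points with the (eventually stable) limit of the maps `F_{m,n}` as `n → ∞`. -/
def IsLimitMap (Δ : ℕ → ℕ → ℝ) (m : ℕ) (F : AddCircle (1 : ℝ) → AddCircle (1 : ℝ)) : Prop :=
  (∀ x y : AddCircle (1 : ℝ), dOf (trunc Δ m) (F x) (F y) ≤ dOf Δ x y) ∧
  (∀ x ∈ DptsAll, ∃ N : ℕ, ∀ n ≥ N, Fchain Δ m n x = F x)

/-- A subset `U` of a space with a distance function `d` is `δ`-connected if every pair of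
points of `U` is joined by a finite sequence of points of `U` with consecutive
distances at most `δ`. -/
def DConn {α : Type*} (d : α → α → ℝ) (δ : ℝ) (U : Set α) : Prop :=
  ∀ x ∈ U, ∀ y ∈ U, ∃ (N : ℕ) (c : Fin (N + 1) → α),
    (∀ i, c i ∈ U) ∧ c 0 = x ∧ c (Fin.last N) = y ∧
      ∀ i : Fin N, d (c i.castSucc) (c i.succ) ≤ δ

/-- `U` is a `δ`-component of `S`: a maximal `δ`-connected subset of `S`. -/
def DComp {α : Type*} (d : α → α → ℝ) (δ : ℝ) (S U : Set α) : Prop :=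
  U ⊆ S ∧ DConn d δ U ∧ ∀ V : Set α, U ⊆ V → V ⊆ S → DConn d δ V → V = U

/-- The diameter of a set with respect to a distance function `d`. -/
def ddiam {α : Type*} (d : α → α → ℝ) (S : Set α) : ℝ :=
  sSup {r | ∃ x ∈ S, ∃ y ∈ S, r = d x y}

set_option maxHeartbeats 1000000

namespace AuxProof

open Set

lemma circRep_coe {u : ℝ} (hu : u ∈ Set.Ico (0:ℝ) 1) : circRep (u : AddCircle (1:ℝ)) = u := by
  have h : circRep (u : AddCircle (1:ℝ)) = toIcoMod (one_pos) (0:ℝ) u := rfl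
  rw [h, toIcoMod_eq_self]
  simpa using hu

lemma coe_circRep (x : AddCircle (1:ℝ)) : ((circRep x : ℝ) : AddCircle (1:ℝ)) = x :=
  (AddCircle.equivIco 1 0).symm_apply_apply x

lemma circRep_mem (x : AddCircle (1:ℝ)) : circRep x ∈ Set.Ico (0:ℝ) 1 := by
  simpa [circRep] using ((AddCircle.equivIco 1 0) x).2

lemma coe_one_eq_zero : ((1:ℝ) : AddCircle (1:ℝ)) = 0 := by
  have := AddCircle.coe_period (p := (1:ℝ))
  exact this

lemma foldPhi_zero : foldPhi 0 = 0 := by norm_num [foldPhi]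

lemma foldPhi_one : foldPhi 1 = 1 := by norm_num [foldPhi]

lemma realFold (s a : ℕ) (ha : a < 2^(s+1)) :
    ∃ b : ℕ, b < 2^s ∧ ∀ u : ℝ, (a:ℝ)/2^(s+1) ≤ u → u ≤ ((a:ℝ)+1)/2^(s+1) →
      (b:ℝ)/2^s ≤ foldPhi u ∧ foldPhi u ≤ ((b:ℝ)+1)/2^s := by
  have ha' := ha
  match s with
  | 0 =>
    refine ⟨0, by norm_num, fun u h1 h2 => ?_⟩
    interval_cases a <;>
      · norm_num at h1 h2 ⊢
        unfold foldPhi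
        split_ifs <;> constructor <;> linarith
  | 1 =>
    have h4 : a < 4 := by omega
    clear ha ha'
    interval_cases a
    · exact ⟨0, by norm_num, fun u h1 h2 => by
        norm_num at h1 h2 ⊢; unfold foldPhi; split_ifs <;> constructor <;> linarith⟩
    · exact ⟨1, by norm_num, fun u h1 h2 => by
        norm_num at h1 h2 ⊢; unfold foldPhi; split_ifs <;> constructor <;> linarith⟩
    · exact ⟨0, by norm_num, fun u h1 h2 => by
        norm_num at h1 h2 ⊢; unfold foldPhi; split_ifs <;> constructor <;> linarith⟩
    · exact ⟨1, by norm_num, fun u h1 h2 => by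
        norm_num at h1 h2 ⊢; unfold foldPhi; split_ifs <;> constructor <;> linarith⟩
  | 2 =>
    have h8 : a < 8 := by omega
    clear ha ha'
    interval_cases a
    · exact ⟨0, by norm_num, fun u h1 h2 => by
        norm_num at h1 h2 ⊢; unfold foldPhi; split_ifs <;> constructor <;> linarith⟩
    · exact ⟨1, by norm_num, fun u h1 h2 => by
        norm_num at h1 h2 ⊢; unfold foldPhi; split_ifs <;> constructor <;> linarith⟩
    · exact ⟨2, by norm_num, fun u h1 h2 => by
        norm_num at h1 h2 ⊢; unfold foldPhi; split_ifs <;> constructor <;> linarith⟩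
    · exact ⟨2, by norm_num, fun u h1 h2 => by
        norm_num at h1 h2 ⊢; unfold foldPhi; split_ifs <;> constructor <;> linarith⟩
    · exact ⟨1, by norm_num, fun u h1 h2 => by
        norm_num at h1 h2 ⊢; unfold foldPhi; split_ifs <;> constructor <;> linarith⟩
    · exact ⟨1, by norm_num, fun u h1 h2 => by
        norm_num at h1 h2 ⊢; unfold foldPhi; split_ifs <;> constructor <;> linarith⟩
    · exact ⟨2, by norm_num, fun u h1 h2 => by
        norm_num at h1 h2 ⊢; unfold foldPhi; split_ifs <;> constructor <;> linarith⟩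
    · exact ⟨3, by norm_num, fun u h1 h2 => by
        norm_num at h1 h2 ⊢; unfold foldPhi; split_ifs <;> constructor <;> linarith⟩
  | (s+3) =>
    set P : ℝ := 2^(s+1) with hPdef
    have hP : (0:ℝ) < P := by positivity
    have hp4 : (2:ℝ)^(s+3+1) = 8*P := by rw [show s+3+1 = (s+1)+3 by omega, pow_add]; ring
    have hp3 : (2:ℝ)^(s+3) = 4*P := by rw [show s+3 = (s+1)+2 by omega, pow_add]; ring
    have hK2 : (2:ℕ)^(s+2) = 2*2^(s+1) := by ring
    have hK3 : (2:ℕ)^(s+3) = 4*2^(s+1) := by ring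
    have hK4 : (2:ℕ)^(s+3+1) = 8*2^(s+1) := by ring
    rcases lt_or_ge a (3*2^(s+1)) with hc1 | hc1
    · -- first piece: b = a
      refine ⟨a, by omega, fun u h1 h2 => ?_⟩
      rw [hp4, div_le_iff₀ (by linarith)] at h1
      rw [hp4, le_div_iff₀ (by linarith)] at h2
      have hcast : (a:ℝ) + 1 ≤ 3*P := by
        have : (a:ℕ) + 1 ≤ 3*2^(s+1) := hc1
        have := (Nat.cast_le (α := ℝ)).2 this
        push_cast at this ⊢; linarith [this]
      have hu3 : u ≤ 3/8 := by nlinarith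
      have ha0 : (0:ℝ) ≤ a := by positivity
      unfold foldPhi
      rw [if_pos hu3, hp3]
      constructor
      · rw [div_le_iff₀ (by linarith)]; nlinarith
      · rw [le_div_iff₀ (by linarith)]; nlinarith
    · rcases lt_or_ge a (5*2^(s+1)) with hc2 | hc2
      · -- middle piece
        refine ⟨3*2^(s+2) - (a+1), by omega, fun u h1 h2 => ?_⟩
        have hble : a + 1 ≤ 3*2^(s+2) := by omega
        have hbcast : ((3*2^(s+2) - (a+1) : ℕ) : ℝ) = 6*P - (a+1) := by
          rw [Nat.cast_sub hble]; push_cast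
          rw [hPdef, show s+2 = (s+1)+1 by omega, pow_succ]; ring
        rw [hp4, div_le_iff₀ (by linarith)] at h1
        rw [hp4, le_div_iff₀ (by linarith)] at h2
        have hlo : 3*P ≤ (a:ℝ) := by
          have := (Nat.cast_le (α := ℝ)).2 hc1; push_cast at this; linarith
        have hhi : (a:ℝ) + 1 ≤ 5*P := by
          have : (a:ℕ) + 1 ≤ 5*2^(s+1) := hc2
          have := (Nat.cast_le (α := ℝ)).2 this; push_cast at this; linarith
        have hu5 : u ≤ 5/8 := by nlinarith
        rw [hp3, hbcast]
        rcases le_or_gt u (3/8) with hb1 | hb1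
        · have hfp : foldPhi u = 2*u := by unfold foldPhi; rw [if_pos hb1]
          rw [hfp]
          constructor
          · rw [div_le_iff₀ (by linarith)]; nlinarith
          · rw [le_div_iff₀ (by linarith)]; nlinarith
        · have hfp : foldPhi u = 3/2 - 2*u := by
            unfold foldPhi; rw [if_neg (by linarith), if_pos hu5]
          rw [hfp]
          constructor
          · rw [div_le_iff₀ (by linarith)]; nlinarith
          · rw [le_div_iff₀ (by linarith)]; nlinarith
      · -- last piece: b = a - 2^(s+3)
        refine ⟨a - 2^(s+3), by omega, fun u h1 h2 => ?_⟩
        have hble : 2^(s+3) ≤ a := by omega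
        have hbcast : ((a - 2^(s+3) : ℕ) : ℝ) = (a:ℝ) - 4*P := by
          rw [Nat.cast_sub hble]; push_cast; rw [hp3]
        rw [hp4, div_le_iff₀ (by linarith)] at h1
        rw [hp4, le_div_iff₀ (by linarith)] at h2
        have hlo : 5*P ≤ (a:ℝ) := by
          have := (Nat.cast_le (α := ℝ)).2 hc2; push_cast at this; linarith
        have hu5 : 5/8 ≤ u := by nlinarith
        rw [hp3, hbcast]
        rcases le_or_gt u (5/8) with hb2 | hb2
        · have hfp : foldPhi u = 3/2 - 2*u := by
            unfold foldPhi; rw [if_neg (by linarith), if_pos hb2]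
          rw [hfp]
          constructor
          · rw [div_le_iff₀ (by linarith)]; nlinarith
          · rw [le_div_iff₀ (by linarith)]; nlinarith
        · have hfp : foldPhi u = 2*u - 1 := by
            unfold foldPhi; rw [if_neg (by linarith), if_neg (by linarith)]
          rw [hfp]
          constructor
          · rw [div_le_iff₀ (by linarith)]; nlinarith
          · rw [le_div_iff₀ (by linarith)]; nlinarith


lemma coe_add (a b : ℝ) : ((a+b : ℝ) : AddCircle (1:ℝ)) = ↑a + ↑b := rfl

lemma two_pow_posR (k : ℕ) : (0:ℝ) < 2^k := by positivity

lemma foldMap_eval (Δ : ℕ → ℕ → ℝ) (k : ℕ) (u : ℝ) (hu : u ∈ Set.Ico (0:ℝ) 1) :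
    foldMap Δ k ↑u = if Δ (k+1) (2*⌊u*2^k⌋₊) = Δ k ⌊u*2^k⌋₊
      then ((((⌊u*2^k⌋₊ : ℝ) + foldPhi (u*2^k - (⌊u*2^k⌋₊ : ℝ)))/2^k : ℝ) : AddCircle (1:ℝ))
      else ↑u := by
  show (if Δ (k+1) (2*⌊circRep ((u:ℝ) : AddCircle (1:ℝ))*2^k⌋₊)
          = Δ k ⌊circRep ((u:ℝ) : AddCircle (1:ℝ))*2^k⌋₊
      then ((((⌊circRep ((u:ℝ) : AddCircle (1:ℝ))*2^k⌋₊ : ℝ)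
        + foldPhi (circRep ((u:ℝ) : AddCircle (1:ℝ))*2^k
            - (⌊circRep ((u:ℝ) : AddCircle (1:ℝ))*2^k⌋₊ : ℝ)))/2^k : ℝ) : AddCircle (1:ℝ))
      else ↑u) = _
  rw [circRep_coe hu]

lemma foldMap_fix (Δ : ℕ → ℕ → ℝ) (k M : ℕ) (u : ℝ) (h0 : 0 ≤ u) (h1 : u ≤ 1)
    (hM : u * 2^k = M) : foldMap Δ k ↑u = ↑u := by
  rcases lt_or_eq_of_le h1 with hlt | rfl
  · rw [foldMap_eval Δ k u ⟨h0, hlt⟩, hM]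
    have hfl : ⌊(M:ℝ)⌋₊ = M := Nat.floor_natCast M
    rw [hfl]
    have hu : u = (M:ℝ)/2^k := by
      field_simp [hM]
      exact hM
    split_ifs
    · rw [sub_self, foldPhi_zero, add_zero, ← hu]
    · rfl
  · have hcoe : ((1:ℝ) : AddCircle (1:ℝ)) = ((0:ℝ) : AddCircle (1:ℝ)) := by
      rw [coe_one_eq_zero]; norm_cast
    rw [hcoe, foldMap_eval Δ k 0 (by norm_num)]
    rw [zero_mul, Nat.floor_zero]
    split_ifs <;> norm_num [foldPhi]

lemma foldMap_fold (Δ : ℕ → ℕ → ℝ) (k j : ℕ) (hj : j < 2^k)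
    (hfold : Δ (k+1) (2*j) = Δ k j) (u : ℝ)
    (h1 : (j:ℝ)/2^k ≤ u) (h2 : u ≤ ((j:ℝ)+1)/2^k) :
    foldMap Δ k ↑u = ↑(((j:ℝ) + foldPhi (u*2^k - (j:ℝ)))/2^k) := by
  have hpow : (0:ℝ) < 2^k := two_pow_posR k
  have hj1 : ((j:ℝ)+1) ≤ 2^k := by
    have : (j:ℕ)+1 ≤ 2^k := hj
    have := (Nat.cast_le (α := ℝ)).2 this
    push_cast at this; linarith
  have hu0 : 0 ≤ u := le_trans (by positivity) h1
  have hu1 : u ≤ 1 := le_trans h2 (by rw [div_le_one hpow]; linarith)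
  rcases lt_or_eq_of_le h2 with hlt | heq
  · have hulo : (j:ℝ) ≤ u * 2^k := by rw [div_le_iff₀ hpow] at h1; linarith
    have huhi : u * 2^k < (j:ℝ)+1 := by rw [lt_div_iff₀ hpow] at hlt; linarith
    have hult : u < 1 := lt_of_lt_of_le hlt (by rw [div_le_one hpow]; linarith)
    have hfl : ⌊u*2^k⌋₊ = j := by
      rw [Nat.floor_eq_iff (by positivity)]
      exact ⟨hulo, by push_cast; linarith⟩
    rw [foldMap_eval Δ k u ⟨hu0, hult⟩, hfl, if_pos hfold]
  · have hM : u * 2^k = ((j+1 : ℕ) : ℝ) := by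
      push_cast; rw [heq]; field_simp
    rw [foldMap_fix Δ k (j+1) u hu0 hu1 hM]
    have : u*2^k - (j:ℝ) = 1 := by rw [hM]; push_cast; ring
    rw [this, foldPhi_one]
    congr 1

lemma foldMap_id (Δ : ℕ → ℕ → ℝ) (k j : ℕ) (hj : j < 2^k)
    (hid : ¬ (Δ (k+1) (2*j) = Δ k j)) (u : ℝ)
    (h1 : (j:ℝ)/2^k ≤ u) (h2 : u ≤ ((j:ℝ)+1)/2^k) :
    foldMap Δ k ↑u = ↑u := by
  have hpow : (0:ℝ) < 2^k := two_pow_posR k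
  have hj1 : ((j:ℝ)+1) ≤ 2^k := by
    have : (j:ℕ)+1 ≤ 2^k := hj
    have := (Nat.cast_le (α := ℝ)).2 this
    push_cast at this; linarith
  have hu0 : 0 ≤ u := le_trans (by positivity) h1
  have hu1 : u ≤ 1 := le_trans h2 (by rw [div_le_one hpow]; linarith)
  rcases lt_or_eq_of_le h2 with hlt | heq
  · have hulo : (j:ℝ) ≤ u * 2^k := by rw [div_le_iff₀ hpow] at h1; linarith
    have huhi : u * 2^k < (j:ℝ)+1 := by rw [lt_div_iff₀ hpow] at hlt; linarith
    have hult : u < 1 := lt_of_lt_of_le hlt (by rw [div_le_one hpow]; linarith)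
    have hfl : ⌊u*2^k⌋₊ = j := by
      rw [Nat.floor_eq_iff (by positivity)]
      exact ⟨hulo, by push_cast; linarith⟩
    rw [foldMap_eval Δ k u ⟨hu0, hult⟩, hfl, if_neg hid]
  · have hM : u * 2^k = ((j+1 : ℕ) : ℝ) := by
      push_cast; rw [heq]; field_simp
    exact foldMap_fix Δ k (j+1) u hu0 hu1 hM

def Gmap (Δ : ℕ → ℕ → ℝ) : ℕ → ℕ → AddCircle (1:ℝ) → AddCircle (1:ℝ)
  | 0, _ => id
  | c+1, k => foldMap Δ k ∘ Gmap Δ c (k+1)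

lemma Gmap_succ_right (Δ : ℕ → ℕ → ℝ) (c k : ℕ) :
    Gmap Δ (c+1) k = Gmap Δ c k ∘ foldMap Δ (k+c) := by
  induction c generalizing k with
  | zero => rfl
  | succ c ih =>
      show foldMap Δ k ∘ Gmap Δ (c+1) (k+1) = _
      rw [ih (k+1)]
      show foldMap Δ k ∘ (Gmap Δ c (k+1) ∘ foldMap Δ (k+1+c)) = _
      rw [show k+1+c = k+(c+1) by omega]
      rfl

lemma Fchain_eq_Gmap (Δ : ℕ → ℕ → ℝ) (m : ℕ) : ∀ n, m ≤ n → Fchain Δ m n = Gmap Δ (n+1-m) m := by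
  intro n
  induction n with
  | zero =>
      intro h
      have : m = 0 := Nat.le_zero.mp h
      subst this
      show (if 0 = 0 then foldMap Δ 0 else id) = Gmap Δ 1 0
      rw [if_pos rfl]
      rfl
  | succ n ih =>
      intro h
      rcases Nat.eq_or_lt_of_le h with heq | hlt
      · subst heq
        show (if n+1 ≤ n then Fchain Δ (n+1) n ∘ foldMap Δ (n+1)
            else if n+1 = n+1 then foldMap Δ (n+1) else id) = Gmap Δ (n+1+1-(n+1)) (n+1)
        rw [if_neg (by omega), if_pos rfl, show n+1+1-(n+1) = 1 by omega]
        rfl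
      · have hmn : m ≤ n := by omega
        show (if m ≤ n then Fchain Δ m n ∘ foldMap Δ (n+1) else _) = _
        rw [if_pos hmn, ih hmn]
        have h2 : Gmap Δ (n+1-m+1) m = Gmap Δ (n+1-m) m ∘ foldMap Δ (m+(n+1-m)) :=
          Gmap_succ_right Δ (n+1-m) m
        rw [show m+(n+1-m) = n+1 by omega] at h2
        rw [← h2, show n+1-m+1 = n+1+1-m by omega]

lemma coe_nat (q : ℕ) : ((q:ℝ) : AddCircle (1:ℝ)) = 0 := by
  induction q with
  | zero => norm_num
  | succ q ih =>
      push_cast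
      rw [coe_add, ih, coe_one_eq_zero, add_zero]

lemma coe_dyadic_reduce (r i : ℕ) :
    (((i:ℝ)/2^r : ℝ) : AddCircle (1:ℝ)) = ((((i % 2^r : ℕ):ℝ)/2^r : ℝ) : AddCircle (1:ℝ)) := by
  have hsplit : (i:ℝ)/2^r = ((i % 2^r : ℕ):ℝ)/2^r + ((i / 2^r : ℕ):ℝ) := by
    have h := Nat.div_add_mod i (2^r)
    have hpos : (0:ℝ) < 2^r := by positivity
    field_simp
    have : (i:ℝ) = ((2^r * (i / 2^r) + i % 2^r : ℕ) : ℝ) := by rw [h]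
    rw [this]; push_cast; ring
  rw [hsplit, coe_add, coe_nat, add_zero]

lemma foldMap_dyadic (Δ : ℕ → ℕ → ℝ) (k r i : ℕ) (hrk : r ≤ k) :
    foldMap Δ k (((i:ℝ)/2^r : ℝ) : AddCircle (1:ℝ)) = (((i:ℝ)/2^r : ℝ) : AddCircle (1:ℝ)) := by
  rw [coe_dyadic_reduce r i]
  set i' := i % 2^r with hi'def
  have hi' : i' < 2^r := Nat.mod_lt _ (by positivity)
  have hpr : (0:ℝ) < 2^r := by positivity
  apply foldMap_fix Δ k (i' * 2^(k-r))
  · positivity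
  · rw [div_le_one hpr]
    have := (Nat.cast_le (α := ℝ)).2 (le_of_lt hi')
    push_cast at this; linarith
  · have hpow : (2:ℝ)^k = 2^r * 2^(k-r) := by
      rw [← pow_add]; congr 1; omega
    rw [hpow]; push_cast; field_simp

lemma Fchain_succ (Δ : ℕ → ℕ → ℝ) (m n : ℕ) (h : m ≤ n) :
    Fchain Δ m (n+1) = Fchain Δ m n ∘ foldMap Δ (n+1) := by
  show (if m ≤ n then Fchain Δ m n ∘ foldMap Δ (n+1) else _) = _
  rw [if_pos h]

lemma Fchain_stab (Δ : ℕ → ℕ → ℝ) (m n r i : ℕ) (hmn : m ≤ n) (hr : r ≤ n+1) :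
    ∀ n' ≥ n, Fchain Δ m n' (((i:ℝ)/2^r : ℝ) : AddCircle (1:ℝ))
      = Fchain Δ m n (((i:ℝ)/2^r : ℝ) : AddCircle (1:ℝ)) := by
  intro n' hn'
  induction n', hn' using Nat.le_induction with
  | base => rfl
  | succ n'' hn'' ih =>
      rw [Fchain_succ Δ m n'' (le_trans hmn hn'')]
      show Fchain Δ m n'' (foldMap Δ (n''+1) _) = _
      rw [foldMap_dyadic Δ (n''+1) r i (by omega)]
      exact ih

lemma div_pow_bounds (b₁ k s₁ : ℕ) (u₁ : ℝ)
    (hl : (b₁:ℝ)/2^(k+1+s₁) ≤ u₁) (hr : u₁ ≤ ((b₁:ℝ)+1)/2^(k+1+s₁)) :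
    (b₁:ℝ)/2^(s₁+1) ≤ u₁*2^k ∧ u₁*2^k ≤ ((b₁:ℝ)+1)/2^(s₁+1) := by
  have hpw : (2:ℝ)^(k+1+s₁) = 2^k * 2^(s₁+1) := by rw [← pow_add]; congr 1; omega
  have hQ : (0:ℝ) < 2^(s₁+1) := by positivity
  have hL : (0:ℝ) < 2^(k+1+s₁) := by positivity
  constructor
  · rw [div_le_iff₀ hQ]
    rw [div_le_iff₀ hL] at hl
    calc (b₁:ℝ) ≤ u₁ * 2^(k+1+s₁) := hl
    _ = u₁*2^k*2^(s₁+1) := by rw [hpw]; ring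
  · rw [le_div_iff₀ hQ]
    rw [le_div_iff₀ hL] at hr
    calc u₁*2^k*2^(s₁+1) = u₁ * 2^(k+1+s₁) := by rw [hpw]; ring
    _ ≤ (b₁:ℝ)+1 := hr

lemma main_ind (Δ : ℕ → ℕ → ℝ) (hΔ : IsS1 Δ) :
    ∀ c k b : ℕ, b < 2^(k+c) →
    ∃ s' b' : ℕ, b' < 2^(k+s') ∧
      Δ k (b'/2^s') / 2^s' ≤ Δ (k+c) b ∧
      ∀ u : ℝ, (b:ℝ)/2^(k+c) ≤ u → u ≤ ((b:ℝ)+1)/2^(k+c) →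
        Gmap Δ c k ↑u ∈ dyadicArc (k+s') b' := by
  intro c
  induction c with
  | zero =>
      intro k b hb
      refine ⟨0, b, by simpa using hb, by simp, ?_⟩
      intro u h1 h2
      exact ⟨u, ⟨h1, h2⟩, rfl⟩
  | succ c ih =>
      intro k b hb
      obtain ⟨s₁, b₁, hb₁, hval₁, himg₁⟩ := ih (k+1) b
        (by rw [show (k+1)+c = k+(c+1) by omega]; exact hb)
      rw [show k+1+c = k+(c+1) by omega] at hval₁ himg₁
      set Q := 2^(s₁+1) with hQdef
      have hQpos : 0 < Q := by positivity
      set j := b₁ / Q with hjdef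
      have hj : j < 2^k := by
        apply Nat.div_lt_of_lt_mul
        rw [hQdef, ← pow_add]
        rw [show s₁+1+k = k+1+s₁ by omega]
        exact hb₁
      set j₁ := b₁ / 2^s₁ with hj₁def
      have hj₁ : j₁ < 2^(k+1) := by
        apply Nat.div_lt_of_lt_mul
        rw [← pow_add, show s₁+(k+1) = k+1+s₁ by omega]
        exact hb₁
      have hjj : j₁ / 2 = j := by
        rw [hj₁def, hjdef, Nat.div_div_eq_div_mul, hQdef, pow_succ]
      have hS3 := hΔ.2.2.1 k j hj
      have hΔk1 : Δ (k+1) j₁ = Δ (k+1) (2*j) := by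
        have : j₁ = 2*j ∨ j₁ = 2*j+1 := by omega
        rcases this with h | h
        · rw [h]
        · rw [h, ← hS3.1]
      -- bounds relating b₁ to j
      obtain ⟨r, hr, hbr⟩ : ∃ r, r < Q ∧ b₁ = j*Q + r :=
        ⟨b₁ % Q, Nat.mod_lt _ hQpos, by rw [hjdef, mul_comm]; exact (Nat.div_add_mod b₁ Q).symm⟩
      have hjb : j * Q ≤ b₁ := by rw [hbr]; exact Nat.le_add_right _ _
      have hjb' : b₁ + 1 ≤ (j+1) * Q := by
        rw [hbr, add_mul, one_mul]
        exact Nat.add_le_add_left hr _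
      by_cases hfold : Δ (k+1) (2*j) = Δ k j
      · -- fold case
        obtain ⟨b₂, hb₂, hIm⟩ := realFold s₁ (b₁ - j*Q)
          (by rw [hbr, Nat.add_sub_cancel_left]; exact hr)
        refine ⟨s₁, j*2^s₁ + b₂, ?_, ?_, ?_⟩
        · calc j*2^s₁ + b₂ < j*2^s₁ + 2^s₁ := by omega
          _ = (j+1)*2^s₁ := by ring
          _ ≤ 2^k*2^s₁ := Nat.mul_le_mul_right _ hj
          _ = 2^(k+s₁) := (pow_add 2 k s₁).symm
        · have hdiv : (j*2^s₁ + b₂)/2^s₁ = j := by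
            rw [add_comm, mul_comm, Nat.add_mul_div_left _ _ (by positivity : 0 < 2^s₁),
              Nat.div_eq_of_lt hb₂, zero_add]
          rw [hdiv]
          have hkey : Δ k j = Δ (k+1) j₁ := by rw [hΔk1, hfold]
          rw [hkey]
          exact hval₁
        · intro u h1 h2
          have hy := himg₁ u h1 h2
          obtain ⟨u₁, ⟨hu₁l, hu₁r⟩, hu₁e⟩ := hy
          have hGG : Gmap Δ (c+1) k ↑u = foldMap Δ k (Gmap Δ c (k+1) ↑u) := rfl
          rw [hGG, ← hu₁e]
          obtain ⟨ht1, ht2⟩ := div_pow_bounds b₁ k s₁ u₁ hu₁l hu₁r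
          have hKpos : (0:ℝ) < 2^k := by positivity
          have hQR : (0:ℝ) < (Q:ℝ) := by exact_mod_cast hQpos
          have hQcast : ((Q:ℕ):ℝ) = 2^(s₁+1) := by rw [hQdef]; push_cast; ring
          rw [hQcast] at hQR
          have hjbR : (j:ℝ) * 2^(s₁+1) ≤ b₁ := by
            have := (Nat.cast_le (α := ℝ)).2 hjb
            rw [hQdef] at this; push_cast at this; linarith
          have hjbR' : (b₁:ℝ) + 1 ≤ ((j:ℝ)+1) * 2^(s₁+1) := by
            have := (Nat.cast_le (α := ℝ)).2 hjb'
            rw [hQdef] at this; push_cast at this; linarith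
          have hQ2 : (0:ℝ) < 2^(s₁+1) := by positivity
          have e1 : (j:ℝ)/2^k ≤ u₁ := by
            rw [div_le_iff₀ hKpos]
            rw [div_le_iff₀ hQ2] at ht1
            nlinarith
          have e2 : u₁ ≤ ((j:ℝ)+1)/2^k := by
            rw [le_div_iff₀ hKpos]
            rw [le_div_iff₀ hQ2] at ht2
            nlinarith
          rw [foldMap_fold Δ k j hj hfold u₁ e1 e2]
          -- bounds for v = u₁*2^k - j
          have hacast : ((b₁ - j*Q : ℕ):ℝ) = (b₁:ℝ) - (j:ℝ)*2^(s₁+1) := by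
            rw [Nat.cast_sub hjb]
            rw [hQdef]; push_cast; ring
          have hv1 : ((b₁ - j*Q : ℕ):ℝ)/2^(s₁+1) ≤ u₁*2^k - j := by
            rw [hacast]
            rw [div_le_iff₀ hQ2]
            rw [div_le_iff₀ hQ2] at ht1
            ring_nf
            ring_nf at ht1
            nlinarith
          have hv2 : u₁*2^k - j ≤ (((b₁ - j*Q : ℕ):ℝ)+1)/2^(s₁+1) := by
            rw [hacast]
            rw [le_div_iff₀ hQ2]
            rw [le_div_iff₀ hQ2] at ht2
            nlinarith
          obtain ⟨hf1, hf2⟩ := hIm (u₁*2^k - j) hv1 hv2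
          refine ⟨((j:ℝ) + foldPhi (u₁*2^k - j))/2^k, ⟨?_, ?_⟩, rfl⟩
          · have hpw2 : (2:ℝ)^(k+s₁) = 2^k * 2^s₁ := by rw [← pow_add]
            have hS1pos : (0:ℝ) < 2^s₁ := by positivity
            rw [hpw2, div_le_div_iff₀ (by positivity) hKpos]
            rw [div_le_iff₀ hS1pos] at hf1
            push_cast
            nlinarith
          · have hpw2 : (2:ℝ)^(k+s₁) = 2^k * 2^s₁ := by rw [← pow_add]
            have hS1pos : (0:ℝ) < 2^s₁ := by positivity
            rw [hpw2, div_le_div_iff₀ hKpos (by positivity)]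
            rw [le_div_iff₀ hS1pos] at hf2
            push_cast
            nlinarith
      · -- identity case
        refine ⟨s₁+1, b₁, ?_, ?_, ?_⟩
        · rw [show k+(s₁+1) = k+1+s₁ by omega]; exact hb₁
        · have hhalf : Δ (k+1) (2*j) = Δ k j / 2 := by
            rcases hS3.2 with h | h
            · exact h
            · exact absurd h hfold
          have hjdiv : b₁ / 2^(s₁+1) = j := by rw [hjdef, hQdef]
          rw [hjdiv]
          have hkey : Δ k j = 2 * Δ (k+1) j₁ := by
            rw [hΔk1, hhalf]; ring
          rw [hkey]
          have hpow : (2:ℝ)^(s₁+1) = 2*2^s₁ := by rw [pow_succ]; ring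
          rw [hpow]
          rw [show 2 * Δ (k+1) j₁ / (2*2^s₁) = Δ (k+1) j₁ / 2^s₁ by
            field_simp]
          exact hval₁
        · intro u h1 h2
          have hy := himg₁ u h1 h2
          obtain ⟨u₁, ⟨hu₁l, hu₁r⟩, hu₁e⟩ := hy
          have hGG : Gmap Δ (c+1) k ↑u = foldMap Δ k (Gmap Δ c (k+1) ↑u) := rfl
          rw [hGG, ← hu₁e]
          obtain ⟨ht1, ht2⟩ := div_pow_bounds b₁ k s₁ u₁ hu₁l hu₁r
          have hKpos : (0:ℝ) < 2^k := by positivity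
          have hQ2 : (0:ℝ) < 2^(s₁+1) := by positivity
          have hjbR : (j:ℝ) * 2^(s₁+1) ≤ b₁ := by
            have := (Nat.cast_le (α := ℝ)).2 hjb
            rw [hQdef] at this; push_cast at this; linarith
          have hjbR' : (b₁:ℝ) + 1 ≤ ((j:ℝ)+1) * 2^(s₁+1) := by
            have := (Nat.cast_le (α := ℝ)).2 hjb'
            rw [hQdef] at this; push_cast at this; linarith
          have e1 : (j:ℝ)/2^k ≤ u₁ := by
            rw [div_le_iff₀ hKpos]
            rw [div_le_iff₀ hQ2] at ht1
            nlinarith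
          have e2 : u₁ ≤ ((j:ℝ)+1)/2^k := by
            rw [le_div_iff₀ hKpos]
            rw [le_div_iff₀ hQ2] at ht2
            nlinarith
          rw [foldMap_id Δ k j hj hfold u₁ e1 e2]
          rw [show k+(s₁+1) = k+1+s₁ by omega]
          exact ⟨u₁, ⟨hu₁l, hu₁r⟩, rfl⟩

lemma isConnected_dyadicArc (l b : ℕ) : IsConnected (dyadicArc l b) := by
  apply IsConnected.image
  · apply isConnected_Icc
    have hp : (0:ℝ) < 2^l := by positivity
    apply div_le_div_of_nonneg_right ?_ ?_ |>.trans_eq rfl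
    all_goals try linarith
  · exact (AddCircle.continuous_mk' 1).continuousOn

lemma mem_arc00 (x : AddCircle (1:ℝ)) : x ∈ dyadicArc 0 0 := by
  refine ⟨circRep x, ⟨?_, ?_⟩, coe_circRep x⟩
  · simpa using (circRep_mem x).1
  · have := (circRep_mem x).2
    norm_num
    linarith

lemma chainSums_nonneg (Δ' : ℕ → ℕ → ℝ) (hpos : ∀ l b, b < 2^l → 0 ≤ Δ' l b)
    (x y : AddCircle (1:ℝ)) : ∀ s ∈ chainSums Δ' x y, 0 ≤ s := by
  rintro s ⟨N, c, hc, rfl⟩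
  apply Finset.sum_nonneg
  intro i _
  exact hpos _ _ (hc.1 i)

lemma chainSums_bddBelow (Δ' : ℕ → ℕ → ℝ) (hpos : ∀ l b, b < 2^l → 0 ≤ Δ' l b)
    (x y : AddCircle (1:ℝ)) : BddBelow (chainSums Δ' x y) :=
  ⟨0, fun s hs => chainSums_nonneg Δ' hpos x y s hs⟩

lemma single_mem_chainSums (Δ' : ℕ → ℕ → ℝ) (l b : ℕ) (hb : b < 2^l)
    (x y : AddCircle (1:ℝ)) (hx : x ∈ dyadicArc l b) (hy : y ∈ dyadicArc l b) :
    Δ' l b ∈ chainSums Δ' x y := by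
  refine ⟨0, fun _ => (l, b), ⟨fun _ => hb, ?_, ?_, ?_⟩, by simp⟩
  · rw [Set.iUnion_const]
    exact isConnected_dyadicArc l b
  · rw [Set.iUnion_const]; exact hx
  · rw [Set.iUnion_const]; exact hy

lemma chainSums_nonempty (Δ' : ℕ → ℕ → ℝ) (x y : AddCircle (1:ℝ)) :
    (chainSums Δ' x y).Nonempty :=
  ⟨Δ' 0 0, single_mem_chainSums Δ' 0 0 (by norm_num) x y (mem_arc00 x) (mem_arc00 y)⟩

lemma dOf_le_single (Δ' : ℕ → ℕ → ℝ) (hpos : ∀ l b, b < 2^l → 0 ≤ Δ' l b)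
    (l b : ℕ) (hb : b < 2^l) (x y : AddCircle (1:ℝ))
    (hx : x ∈ dyadicArc l b) (hy : y ∈ dyadicArc l b) : dOf Δ' x y ≤ Δ' l b :=
  csInf_le (chainSums_bddBelow Δ' hpos x y) (single_mem_chainSums Δ' l b hb x y hx hy)

lemma cons_mem_chainSums (Δ' : ℕ → ℕ → ℝ) (l b : ℕ) (hb : b < 2^l)
    (x y z : AddCircle (1:ℝ)) (hx : x ∈ dyadicArc l b) (hy : y ∈ dyadicArc l b)
    (s2 : ℝ) (hs2 : s2 ∈ chainSums Δ' y z) : Δ' l b + s2 ∈ chainSums Δ' x z := by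
  obtain ⟨N2, c2, ⟨hval2, hconn2, hy2, hz2⟩, rfl⟩ := hs2
  refine ⟨N2+1, Fin.cons (l, b) c2, ⟨?_, ?_, ?_, ?_⟩, ?_⟩
  case _ =>
    intro k
    induction k using Fin.cases with
    | zero => rw [Fin.cons_zero]; exact hb
    | succ i => rw [Fin.cons_succ]; exact hval2 i
  case _ =>
    have hU : (⋃ k : Fin (N2+1+1), dyadicArc ((Fin.cons (l,b) c2 : Fin (N2+1+1) → ℕ × ℕ) k).1
        ((Fin.cons (l,b) c2 : Fin (N2+1+1) → ℕ × ℕ) k).2)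
        = dyadicArc l b ∪ ⋃ k : Fin (N2+1), dyadicArc (c2 k).1 (c2 k).2 := by
      ext t
      simp only [Set.mem_iUnion, Set.mem_union]
      constructor
      · rintro ⟨i, hi⟩
        revert hi
        refine Fin.cases ?_ ?_ i
        · rw [Fin.cons_zero]; exact fun h => Or.inl h
        · intro j
          rw [Fin.cons_succ]; exact fun h => Or.inr ⟨j, h⟩
      · rintro (h | ⟨j, hj⟩)
        · exact ⟨0, by rwa [Fin.cons_zero]⟩
        · exact ⟨j.succ, by rwa [Fin.cons_succ]⟩
    rw [hU]
    exact (isConnected_dyadicArc l b).union ⟨y, hy, hy2⟩ hconn2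
  case _ =>
    exact Set.mem_iUnion.mpr ⟨0, by rw [Fin.cons_zero]; exact hx⟩
  case _ =>
    obtain ⟨i, hi⟩ := Set.mem_iUnion.mp hz2
    exact Set.mem_iUnion.mpr ⟨i.succ, by rw [Fin.cons_succ]; exact hi⟩
  case _ =>
    rw [show (fun k => Δ' ((Fin.cons (l,b) c2 : Fin (N2+1+1) → ℕ × ℕ) k).1
        ((Fin.cons (l,b) c2 : Fin (N2+1+1) → ℕ × ℕ) k).2)
      = Fin.cons (Δ' l b) (fun k => Δ' (c2 k).1 (c2 k).2) from ?_]
    · rw [Fin.sum_cons]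
    · funext k
      induction k using Fin.cases with
      | zero => rw [Fin.cons_zero, Fin.cons_zero]
      | succ i => rw [Fin.cons_succ, Fin.cons_succ]

lemma dOf_le_arc_add (Δ' : ℕ → ℕ → ℝ) (hpos : ∀ l b, b < 2^l → 0 ≤ Δ' l b)
    (l b : ℕ) (hb : b < 2^l) (x y z : AddCircle (1:ℝ))
    (hx : x ∈ dyadicArc l b) (hy : y ∈ dyadicArc l b) :
    dOf Δ' x z ≤ Δ' l b + dOf Δ' y z := by
  have key : ∀ s2 ∈ chainSums Δ' y z, dOf Δ' x z ≤ Δ' l b + s2 := fun s2 hs2 =>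
    csInf_le (chainSums_bddBelow Δ' hpos x z)
      (cons_mem_chainSums Δ' l b hb x y z hx hy s2 hs2)
  have h2 : dOf Δ' x z - Δ' l b ≤ dOf Δ' y z := by
    apply le_csInf (chainSums_nonempty Δ' y z)
    intro s2 hs2
    linarith [key s2 hs2]
  linarith

lemma trunc_eval (Δ : ℕ → ℕ → ℝ) (m s' b' : ℕ) :
    trunc Δ m (m+s') b' = Δ m (b'/2^s') / 2^s' := by
  unfold trunc
  rcases Nat.eq_zero_or_pos s' with rfl | hs
  · rw [if_pos (by omega)]
    norm_num
  · rw [if_neg (by omega), show m+s'-m = s' by omega]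

lemma trunc_nonneg (Δ : ℕ → ℕ → ℝ) (hΔ : IsS1 Δ) (m : ℕ) :
    ∀ l b, b < 2^l → 0 ≤ trunc Δ m l b := by
  intro l b hb
  unfold trunc
  split_ifs with h
  · exact (hΔ.2.1 l b hb).le
  · apply div_nonneg _ (by positivity)
    apply (hΔ.2.1 m _ _).le
    apply Nat.div_lt_of_lt_mul
    rw [← pow_add, show l-m+m = l by omega]
    exact hb

end AuxProof

/-- For each `m`, the maps `F_{m,n} : Γ → Γ_m` converge uniformly to `F_m : Γ → Γ_m`
as `n → ∞`. -/
theorem Fchain_tendstoUniformly_limitMap (Δ : ℕ → ℕ → ℝ) (hΔ : IsS1 Δ) (m : ℕ)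
    (F : AddCircle (1 : ℝ) → AddCircle (1 : ℝ)) (hF : IsLimitMap Δ m F) :
    ∀ ε : ℝ, 0 < ε → ∃ N : ℕ, ∀ n ≥ N, ∀ x : AddCircle (1 : ℝ),
      dOf (trunc Δ m) (Fchain Δ m n x) (F x) < ε := by
  classical
  intro ε hε
  obtain ⟨N₀, hN₀⟩ := hΔ.2.2.2 (ε/4) (by positivity)
  refine ⟨N₀ + m + 1, fun n hn x => ?_⟩
  have hmn : m ≤ n := by omega
  set t := circRep x with htdef
  have ht : t ∈ Set.Ico (0:ℝ) 1 := AuxProof.circRep_mem x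
  have htx : ((t:ℝ) : AddCircle (1:ℝ)) = x := AuxProof.coe_circRep x
  set j := ⌊t * 2^(n+1)⌋₊ with hjdef
  have hpow : (0:ℝ) < 2^(n+1) := by positivity
  have hjlt : j < 2^(n+1) := by
    rw [hjdef]
    apply (Nat.floor_lt (mul_nonneg ht.1 hpow.le)).mpr
    push_cast
    nlinarith [ht.2]
  have hjt1 : (j:ℝ)/2^(n+1) ≤ t := by
    rw [div_le_iff₀ hpow]
    exact Nat.floor_le (mul_nonneg ht.1 hpow.le)
  have hjt2 : t ≤ ((j:ℝ)+1)/2^(n+1) := by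
    rw [le_div_iff₀ hpow]
    exact (Nat.lt_floor_add_one _).le
  obtain ⟨s', b', hb', hval, himg⟩ := AuxProof.main_ind Δ hΔ (n+1-m) m j
    (by rw [show m+(n+1-m) = n+1 by omega]; exact hjlt)
  rw [show m+(n+1-m) = n+1 by omega] at hval himg
  have hG : Fchain Δ m n = AuxProof.Gmap Δ (n+1-m) m := AuxProof.Fchain_eq_Gmap Δ m n hmn
  have hx1 : Fchain Δ m n x ∈ dyadicArc (m+s') b' := by
    rw [← htx, hG]; exact himg t hjt1 hjt2
  set p : AddCircle (1:ℝ) := (((j:ℝ)/2^(n+1) : ℝ) : AddCircle (1:ℝ)) with hpdef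
  have hple : (j:ℝ)/2^(n+1) ≤ ((j:ℝ)+1)/2^(n+1) := by gcongr <;> linarith
  have hp1 : Fchain Δ m n p ∈ dyadicArc (m+s') b' := by
    rw [hG]; exact himg _ le_rfl hple
  have hpD : p ∈ DptsAll := Set.mem_iUnion.mpr ⟨n+1, ⟨j, rfl⟩⟩
  obtain ⟨Np, hNp⟩ := hF.2 p hpD
  have hFp : F p = Fchain Δ m n p := by
    rw [← hNp (max n Np) (le_max_right _ _)]
    exact AuxProof.Fchain_stab Δ m n (n+1) j hmn (le_refl _) (max n Np) (le_max_left _ _)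
  have hpmem : p ∈ dyadicArc (n+1) j := ⟨_, ⟨le_rfl, hple⟩, rfl⟩
  have hxmem : x ∈ dyadicArc (n+1) j := ⟨t, ⟨hjt1, hjt2⟩, htx⟩
  have hΔpos : ∀ l b, b < 2^l → 0 ≤ Δ l b := fun l b hb => (hΔ.2.1 l b hb).le
  have htpos := AuxProof.trunc_nonneg Δ hΔ m
  have hd3 : dOf Δ p x ≤ Δ (n+1) j :=
    AuxProof.dOf_le_single Δ hΔpos (n+1) j hjlt p x hpmem hxmem
  have hd2 : dOf (trunc Δ m) (F p) (F x) ≤ dOf Δ p x := hF.1 p x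
  have hsmall : Δ (n+1) j < ε/4 := hN₀ (n+1) (by omega) j hjlt
  have htv : trunc Δ m (m+s') b' ≤ Δ (n+1) j := by
    rw [AuxProof.trunc_eval]; exact hval
  have hd1 : dOf (trunc Δ m) (Fchain Δ m n x) (F x)
      ≤ trunc Δ m (m+s') b' + dOf (trunc Δ m) (F p) (F x) := by
    apply AuxProof.dOf_le_arc_add (trunc Δ m) htpos (m+s') b' hb' _ (F p) _ hx1
    rw [hFp]; exact hp1
  linarith
end
end

section
/- Let Γ be a metric space with diameter at most 1 and let Γ₀ be the circle 𝕊 = [0,1]/{0,1} equipped with the arc-length metric λ(s,t) = min{|t−s|, 1−|t−s|}. Suppose there exists a constant C ≥ 1 such that F : Γ → Γ₀ is C-Lipschitz and, for every subset E ⊆ Γ₀ with diam(E) > 0, every diam(E)-component of F⁻¹(E) has diameter at most C·diam(E). Then, for C′ := max{C, 8}, for every r > 0 and every subset E ⊆ Γ₀ with diam(E) ≤ r, every r-component of F⁻¹(E) has diameter at most C′·r. -/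
theorem exists_dcomp {α : Type*} (d : α → α → ℝ) (δ : ℝ) (S W : Set α)
    (hWS : W ⊆ S) (hW : DConn d δ W) : ∃ U, W ⊆ U ∧ DComp d δ S U := by
  set 𝒮 : Set (Set α) := {V | W ⊆ V ∧ V ⊆ S ∧ DConn d δ V} with h𝒮
  have hchain : ∀ c ⊆ 𝒮, IsChain (· ⊆ ·) c → c.Nonempty →
      ∃ ub ∈ 𝒮, ∀ s ∈ c, s ⊆ ub := by
    intro c hc hchain hne
    refine ⟨⋃₀ c, ⟨?_, ?_, ?_⟩, fun s hs => Set.subset_sUnion_of_mem hs⟩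
    · obtain ⟨s, hs⟩ := hne
      exact (hc hs).1.trans (Set.subset_sUnion_of_mem hs)
    · exact Set.sUnion_subset fun s hs => (hc hs).2.1
    · intro x hx y hy
      obtain ⟨s, hs, hxs⟩ := hx
      obtain ⟨t, ht, hyt⟩ := hy
      rcases hchain.total hs ht with hst | hts
      · obtain ⟨N, cc, h1, h2, h3, h4⟩ := (hc ht).2.2 x (hst hxs) y hyt
        exact ⟨N, cc, fun i => Set.subset_sUnion_of_mem ht (h1 i), h2, h3, h4⟩
      · obtain ⟨N, cc, h1, h2, h3, h4⟩ := (hc hs).2.2 x hxs y (hts hyt)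
        exact ⟨N, cc, fun i => Set.subset_sUnion_of_mem hs (h1 i), h2, h3, h4⟩
  obtain ⟨m, hWm, hm⟩ := zorn_subset_nonempty 𝒮 hchain W ⟨Set.Subset.rfl, hWS, hW⟩
  refine ⟨m, hWm, hm.prop.2.1, hm.prop.2.2, ?_⟩
  intro V hmV hVS hV
  exact (hm.eq_of_subset ⟨hm.prop.1.trans hmV, hVS, hV⟩ hmV).symm

theorem addCircle_dist_eq (s t : ℝ) (h : |s - t| < 1/2) :
    dist ((s : AddCircle (1:ℝ))) (t : AddCircle (1:ℝ)) = |s - t| := by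
  rw [dist_eq_norm, ← AddCircle.coe_sub, AddCircle.norm_eq]
  have hr : round ((1:ℝ)⁻¹ * (s - t)) = 0 := by
    rw [round_eq_zero_iff]
    constructor <;> [nlinarith [neg_abs_le (s-t)]; nlinarith [le_abs_self (s-t)]]
  rw [hr]; ring_nf

theorem addCircle_lift (x : AddCircle (1:ℝ)) (e : ℝ) :
    ∃ t : ℝ, (t : AddCircle (1:ℝ)) = x ∧ |t - e| = dist x ((e : AddCircle (1:ℝ))) := by
  obtain ⟨y, rfl⟩ := QuotientAddGroup.mk_surjective x
  refine ⟨e + (y - e - round ((1:ℝ)⁻¹ * (y - e))), ?_, ?_⟩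
  · have h0 : ((round ((1:ℝ)⁻¹ * (y - e)) : ℝ) : AddCircle (1:ℝ)) = 0 := by
      rw [AddCircle.coe_eq_zero_iff]
      exact ⟨round ((1:ℝ)⁻¹ * (y - e)), by simp⟩
    rw [show e + (y - e - (round ((1:ℝ)⁻¹ * (y - e)) : ℝ)) =
      y - (round ((1:ℝ)⁻¹ * (y - e)) : ℝ) by ring, AddCircle.coe_sub, h0, sub_zero]
  · have hc : (QuotientAddGroup.mk y : AddCircle (1:ℝ)) - (e : AddCircle (1:ℝ))
        = ((y - e : ℝ) : AddCircle (1:ℝ)) := (AddCircle.coe_sub _ _ _).symm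
    rw [dist_eq_norm, hc, AddCircle.norm_eq]
    congr 1; ring

/-- Let `Γ` be a metric space of diameter at most `1` and let `Γ₀` be the circle
`𝕊 = [0,1]/{0,1}` with the arc-length metric (realized as `AddCircle (1 : ℝ)` with its
quotient-norm metric `λ(s,t) = min {|t-s|, 1-|t-s|}`). Suppose `F : Γ → Γ₀` is `C`-Lipschitz
for some `C ≥ 1` and, for every `E ⊆ Γ₀` with `diam E > 0`, every `diam E`-component of
`F ⁻¹' E` has diameter at most `C * diam E`. Then, with `C' := max C 8`, for every `r > 0`
and every `E ⊆ Γ₀` with `diam E ≤ r`, every `r`-component of `F ⁻¹' E` has diameter at most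
`C' * r`. -/
theorem lipschitzLight_criterion (Γ : Type*) [MetricSpace Γ]
    (hΓ : EMetric.diam (Set.univ : Set Γ) ≤ 1)
    (F : Γ → AddCircle (1 : ℝ)) (C : ℝ) (hC : 1 ≤ C)
    (hLip : ∀ x y : Γ, dist (F x) (F y) ≤ C * dist x y)
    (hcomp : ∀ E : Set (AddCircle (1 : ℝ)), 0 < Metric.diam E →
      ∀ U : Set Γ, DComp dist (Metric.diam E) (F ⁻¹' E) U →
        Metric.diam U ≤ C * Metric.diam E) :
    ∀ r : ℝ, 0 < r → ∀ E : Set (AddCircle (1 : ℝ)), Metric.diam E ≤ r →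
      ∀ U : Set Γ, DComp dist r (F ⁻¹' E) U → Metric.diam U ≤ max C 8 * r := by

  intro r hr E hE U hU
  have hC8 : (8:ℝ) ≤ max C 8 := le_max_right _ _
  have hCC : C ≤ max C 8 := le_max_left _ _
  have hbΓ : Bornology.IsBounded (Set.univ : Set Γ) := by
    rw [Metric.isBounded_iff_ediam_ne_top]
    exact ne_top_of_le_ne_top (by simp) hΓ
  by_cases hr8 : 1 ≤ 8 * r
  · have h1 : Metric.diam U ≤ 1 := by
      have h2 : EMetric.diam U ≤ 1 := (EMetric.diam_mono (Set.subset_univ U)).trans hΓ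
      have := ENNReal.toReal_mono (by simp) h2
      simpa [Metric.diam, EMetric.diam] using this
    nlinarith
  · push_neg at hr8
    rcases E.eq_empty_or_nonempty with rfl | ⟨e, he⟩
    · have hUe : U = ∅ := Set.subset_empty_iff.mp (by simpa using hU.1)
      rw [hUe, Metric.diam_empty]
      positivity
    · haveI : Fact ((0:ℝ) < 1) := ⟨zero_lt_one⟩
      have hbcirc : Bornology.IsBounded (Set.univ : Set (AddCircle (1:ℝ))) :=
        isCompact_univ.isBounded
      have hbE : Bornology.IsBounded E := hbcirc.subset (Set.subset_univ E)
      obtain ⟨e0, he0⟩ := QuotientAddGroup.mk_surjective e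
      set T : Set ℝ := {t : ℝ | ((t : ℝ) : AddCircle (1:ℝ)) ∈ E ∧ |t - e0| ≤ r} with hT
      have he0T : e0 ∈ T := by
        refine ⟨by rw [show ((e0 : ℝ) : AddCircle (1:ℝ)) = e from he0]; exact he, by simp [hr.le]⟩
      have hTd : ∀ s ∈ T, ∀ t ∈ T, |s - t| ≤ r := by
        intro s hs t ht
        have h2 : |s - t| < 1/2 := by
          have := abs_sub_abs_le_abs_sub s t
          have h3 : |s - t| ≤ |s - e0| + |t - e0| := by
            calc |s - t| = |(s - e0) - (t - e0)| := by ring_nf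
            _ ≤ |s - e0| + |t - e0| := abs_sub _ _
          linarith [hs.2, ht.2]
        have := addCircle_dist_eq s t h2
        rw [← this]
        exact (Metric.dist_le_diam_of_mem hbE hs.1 ht.1).trans hE
      have hbdd : BddAbove T := ⟨e0 + r, fun t ht => by
        have := le_abs_self (t - e0); linarith [ht.2]⟩
      set M := sSup T with hM
      set a := M - r with ha
      have hTsub : T ⊆ Set.Icc a (a + r) := by
        intro t ht
        have h1 : t ≤ M := le_csSup hbdd ht
        have h2 : M ≤ t + r := csSup_le ⟨e0, he0T⟩ (fun s hs => by
          have := le_abs_self (s - t); linarith [hTd s hs t ht])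
        constructor <;> [linarith; linarith]
      set E' : Set (AddCircle (1:ℝ)) :=
        (fun t : ℝ => ((t : ℝ) : AddCircle (1:ℝ))) '' Set.Icc a (a + r) with hE'
      have hEE' : E ⊆ E' := by
        intro x hx
        obtain ⟨t, htx, htd⟩ := addCircle_lift x e0
        have htT : t ∈ T := ⟨by rw [htx]; exact hx, by
          rw [htd, he0]
          exact (Metric.dist_le_diam_of_mem hbE hx he).trans hE⟩
        exact ⟨t, hTsub htT, htx⟩
      have hbE' : Bornology.IsBounded E' := hbcirc.subset (Set.subset_univ E')
      have hr2 : r < 1/2 := by linarith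
      have hdE' : Metric.diam E' = r := by
        apply le_antisymm
        · apply Metric.diam_le_of_forall_dist_le hr.le
          rintro x ⟨s, hs, rfl⟩ y ⟨t, ht, rfl⟩
          have h2 : |s - t| ≤ r := by
            rcases hs with ⟨hs1, hs2⟩; rcases ht with ⟨ht1, ht2⟩
            rw [abs_le]; constructor <;> linarith
          rw [addCircle_dist_eq s t (lt_of_le_of_lt h2 hr2)]
          exact h2
        · have h1 : dist ((a : AddCircle (1:ℝ))) ((a + r : ℝ) : AddCircle (1:ℝ)) = r := by
            rw [addCircle_dist_eq a (a + r) (by rw [abs_of_nonpos] <;> [skip; linarith] ; linarith)]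
            rw [abs_of_nonpos] <;> linarith
          rw [← h1]
          exact Metric.dist_le_diam_of_mem hbE'
            ⟨a, ⟨le_refl a, by linarith⟩, rfl⟩ ⟨a + r, ⟨by linarith, le_refl _⟩, rfl⟩
      obtain ⟨V, hUV, hV⟩ := exists_dcomp dist r (F ⁻¹' E') U
        (hU.1.trans (Set.preimage_mono hEE')) hU.2.1
      have hVd : Metric.diam V ≤ C * r := by
        have := hcomp E' (by rw [hdE']; exact hr) V (by rw [hdE']; exact hV)
        rwa [hdE'] at this
      have hbV : Bornology.IsBounded V := hbΓ.subset (Set.subset_univ V)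
      have := (Metric.diam_mono hUV hbV).trans hVd
      nlinarith
end

section
/- For all m ≤ n in ℕ and every x ∈ 𝕊, F_{m,n}(F_{n+1}(x)) = F_m(x). -/
noncomputable section

section Aux

open Set

variable {α : Type*} [MetricSpace α] [NormalSpace α]

lemma walk_sum_bound {N : ℕ} (S : Fin (N + 1) → Set α) (d : Fin (N + 1) → ℝ)
    (hdiam : ∀ k, ∀ p ∈ S k, ∀ q ∈ S k, dist p q ≤ d k)
    (G : SimpleGraph (Fin (N + 1)))
    (hG : ∀ a b, G.Adj a b → (S a ∩ S b).Nonempty) :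
    ∀ {a b : Fin (N + 1)} (W : G.Walk a b), ∀ p ∈ S a, ∀ q ∈ S b,
      dist p q ≤ (W.support.map d).sum := by
  intro a b W
  induction W with
  | nil => intro p hp q hq; simpa using hdiam _ p hp q hq
  | @cons a c b h W ih =>
    intro p hp q hq
    obtain ⟨r, hr1, hr2⟩ := hG _ _ h
    simp only [SimpleGraph.Walk.support_cons, List.map_cons, List.sum_cons]
    calc dist p q ≤ dist p r + dist r q := dist_triangle _ _ _
      _ ≤ d a + (W.support.map d).sum :=
          add_le_add (hdiam _ p hp r hr1) (ih r hr2 q hq)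

lemma dist_le_sum_of_connected {N : ℕ} (S : Fin (N + 1) → Set α) (d : Fin (N + 1) → ℝ)
    (hS : ∀ k, IsClosed (S k)) (hd0 : ∀ k, 0 ≤ d k)
    (hdiam : ∀ k, ∀ p ∈ S k, ∀ q ∈ S k, dist p q ≤ d k)
    (hconn : IsPreconnected (⋃ k, S k))
    {z w : α} (hz : z ∈ ⋃ k, S k) (hw : w ∈ ⋃ k, S k) :
    dist z w ≤ ∑ k, d k := by
  classical
  obtain ⟨iz, hziz⟩ := mem_iUnion.1 hz
  obtain ⟨iw, hwiw⟩ := mem_iUnion.1 hw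
  set G : SimpleGraph (Fin (N + 1)) := SimpleGraph.fromRel (fun k l => (S k ∩ S l).Nonempty)
    with hGdef
  have hG : ∀ a b, G.Adj a b → (S a ∩ S b).Nonempty := by
    rintro a b ⟨hne, h | h⟩
    · exact h
    · obtain ⟨r, h1, h2⟩ := h; exact ⟨r, h2, h1⟩
  have hreach : G.Reachable iz iw := by
    by_contra hnr
    set A := ⋃ k ∈ {l : Fin (N + 1) | G.Reachable iz l}, S k with hA
    set B := ⋃ k ∈ {l : Fin (N + 1) | ¬G.Reachable iz l}, S k with hB
    have hAc : IsClosed A := (Set.toFinite _).isClosed_biUnion fun i _ => hS i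
    have hBc : IsClosed B := (Set.toFinite _).isClosed_biUnion fun i _ => hS i
    have hdisj : Disjoint A B := by
      rw [Set.disjoint_left]
      rintro p hpA hpB
      obtain ⟨k, hk, hpk⟩ := mem_iUnion₂.1 hpA
      obtain ⟨l, hl, hpl⟩ := mem_iUnion₂.1 hpB
      rcases eq_or_ne k l with rfl | hne
      · exact hl hk
      · exact hl (hk.trans (SimpleGraph.Adj.reachable ⟨hne, Or.inl ⟨p, hpk, hpl⟩⟩))
    obtain ⟨U, V, hU, hV, hAU, hBV, hUV⟩ := normal_separation hAc hBc hdisj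
    have hsub : (⋃ k, S k) ⊆ U ∪ V := by
      intro p hp
      obtain ⟨k, hpk⟩ := mem_iUnion.1 hp
      by_cases hk : G.Reachable iz k
      · exact Or.inl (hAU (mem_iUnion₂.2 ⟨k, hk, hpk⟩))
      · exact Or.inr (hBV (mem_iUnion₂.2 ⟨k, hk, hpk⟩))
    have hU' : (⋃ k, S k) ⊆ U :=
      hconn.subset_left_of_subset_union hU hV hUV hsub
        ⟨z, hz, hAU (mem_iUnion₂.2 ⟨iz, SimpleGraph.Reachable.refl _, hziz⟩)⟩
    exact Set.disjoint_left.1 hUV (hU' hw) (hBV (mem_iUnion₂.2 ⟨iw, hnr, hwiw⟩))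
  obtain ⟨W⟩ := hreach
  have hnd := W.toPath.2.support_nodup
  calc dist z w ≤ ((W.toPath : G.Walk iz iw).support.map d).sum :=
        walk_sum_bound S d hdiam G hG _ z hziz w hwiw
    _ = ∑ k ∈ (W.toPath : G.Walk iz iw).support.toFinset, d k :=
        (List.sum_toFinset _ hnd).symm
    _ ≤ ∑ k, d k :=
        Finset.sum_le_sum_of_subset_of_nonneg (Finset.subset_univ _) fun i _ _ => hd0 i

end Aux
section Aux2
set_option linter.unusedSectionVars false

open Set

lemma coe_circRep (x : AddCircle (1:ℝ)) : ((circRep x : ℝ) : AddCircle (1:ℝ)) = x :=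
  (AddCircle.equivIco 1 0).symm_apply_apply x

lemma circRep_mem (x : AddCircle (1:ℝ)) : circRep x ∈ Set.Ico (0:ℝ) 1 := by
  simpa [circRep] using ((AddCircle.equivIco 1 0) x).2

lemma circRep_coe {t : ℝ} (ht : t ∈ Set.Ico (0:ℝ) 1) : circRep ((t : ℝ) : AddCircle (1:ℝ)) = t := by
  have := AddCircle.coe_equivIco_mk_apply (1:ℝ) t
  simp only [div_one, mul_one] at this
  rw [circRep, this, Int.fract_eq_self.2 ht]

lemma IsS1.lower {Δ : ℕ → ℕ → ℝ} (hΔ : IsS1 Δ) :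
    ∀ k j, j < 2 ^ k → (1/2 : ℝ) ^ k ≤ Δ k j := by
  intro k
  induction k with
  | zero => intro j hj; interval_cases j; simp [hΔ.1]
  | succ k ih =>
    intro j hj
    have hj' : j / 2 < 2 ^ k := by rw [pow_succ] at hj; omega
    obtain ⟨heq, hor⟩ := hΔ.2.2.1 k (j / 2) hj'
    have hlow : (1/2 : ℝ) ^ (k+1) ≤ Δ (k+1) (2 * (j / 2)) := by
      rcases hor with h | h
      · rw [h, pow_succ]
        have := ih (j / 2) hj'
        linarith
      · rw [h, pow_succ]
        have h1 := ih (j / 2) hj'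
        have h2 : (0:ℝ) < (1/2:ℝ)^k := by positivity
        nlinarith
    rcases Nat.even_or_odd j with ⟨r, rfl⟩ | ⟨r, rfl⟩
    · have : r + r = 2 * ((r + r) / 2) := by omega
      rwa [this]
    · have : 2 * r + 1 = 2 * ((2 * r + 1) / 2) + 1 := by omega
      rw [this, ← heq]; exact hlow

lemma IsS1.pos' {Δ : ℕ → ℕ → ℝ} (hΔ : IsS1 Δ) {k j : ℕ} (hj : j < 2 ^ k) : 0 < Δ k j :=
  hΔ.2.1 k j hj

lemma trunc_lower {Δ : ℕ → ℕ → ℝ} (hΔ : IsS1 Δ) (M k j : ℕ) (hj : j < 2 ^ k) :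
    (1/2 : ℝ) ^ k ≤ trunc Δ M k j := by
  rw [trunc]
  split_ifs with h
  · exact hΔ.lower k j hj
  · push_neg at h
    have hje : j / 2 ^ (k - M) < 2 ^ M := by
      apply Nat.div_lt_of_lt_mul
      calc j < 2 ^ k := hj
        _ = 2 ^ (k - M) * 2 ^ M := by rw [← pow_add]; congr 1; omega
    have h1 : (1/2 : ℝ) ^ M ≤ Δ M (j / 2 ^ (k - M)) := hΔ.lower M _ hje
    have hk : M + (k - M) = k := by omega
    calc (1/2 : ℝ) ^ k = (1/2:ℝ) ^ M * (1/2:ℝ) ^ (k - M) := by rw [← pow_add, hk]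
      _ ≤ Δ M (j / 2 ^ (k - M)) * (1/2:ℝ) ^ (k - M) :=
          mul_le_mul_of_nonneg_right h1 (by positivity)
      _ = Δ M (j / 2 ^ (k - M)) / 2 ^ (k - M) := by
          rw [one_div, inv_pow, div_eq_mul_inv]

lemma trunc_pos {Δ : ℕ → ℕ → ℝ} (hΔ : IsS1 Δ) (M : ℕ) {k j : ℕ} (hj : j < 2 ^ k) :
    0 < trunc Δ M k j :=
  lt_of_lt_of_le (by positivity) (trunc_lower hΔ M k j hj)

lemma dist_coe_le (a b : ℝ) :
    dist ((a : ℝ) : AddCircle (1:ℝ)) ((b : ℝ) : AddCircle (1:ℝ)) ≤ |a - b| := by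
  rw [dist_eq_norm]
  have h : ((a:ℝ) : AddCircle (1:ℝ)) - ((b:ℝ) : AddCircle (1:ℝ)) = (((a - b : ℝ)) : AddCircle (1:ℝ)) := by
    norm_cast
  rw [h, AddCircle.norm_eq]
  simpa using round_le (a - b) 0

lemma dyadicArc_isConnected (n j : ℕ) : IsConnected (dyadicArc n j) := by
  apply IsConnected.image (isConnected_Icc ?_) _ (AddCircle.continuous_mk' 1).continuousOn
  apply div_le_div_of_nonneg_right ?_ (by positivity)
  linarith

lemma dyadicArc_isClosed (n j : ℕ) : IsClosed (dyadicArc n j) :=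
  (isCompact_Icc.image (AddCircle.continuous_mk' 1)).isClosed

lemma dyadicArc_dist_le (n j : ℕ) :
    ∀ p ∈ dyadicArc n j, ∀ q ∈ dyadicArc n j, dist p q ≤ (1/2 : ℝ) ^ n := by
  rintro p ⟨a, ha, rfl⟩ q ⟨b, hb, rfl⟩
  calc dist ((a:ℝ) : AddCircle (1:ℝ)) ((b:ℝ) : AddCircle (1:ℝ)) ≤ |a - b| := dist_coe_le a b
    _ ≤ (1/2:ℝ)^n := by
        rw [abs_sub_le_iff]
        constructor <;>
        · rw [div_pow, one_pow]
          rw [sub_le_iff_le_add]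
          rcases ha with ⟨ha1, ha2⟩
          rcases hb with ⟨hb1, hb2⟩
          first
          | calc a ≤ ((j:ℝ)+1)/2^n := ha2
              _ = 1/2^n + (j:ℝ)/2^n := by ring
              _ ≤ 1/2^n + b := by linarith
          | calc b ≤ ((j:ℝ)+1)/2^n := hb2
              _ = 1/2^n + (j:ℝ)/2^n := by ring
              _ ≤ 1/2^n + a := by linarith

lemma dist_le_chainSum {Δ : ℕ → ℕ → ℝ} (hΔ : IsS1 Δ) (M : ℕ) {z w : AddCircle (1:ℝ)}
    {N : ℕ} {c : Fin (N + 1) → ℕ × ℕ} (hc : IsDyadicChain N c z w) :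
    dist z w ≤ ∑ k, trunc Δ M (c k).1 (c k).2 := by
  apply dist_le_sum_of_connected (fun k => dyadicArc (c k).1 (c k).2)
    (fun k => trunc Δ M (c k).1 (c k).2)
    (fun k => dyadicArc_isClosed _ _)
    (fun k => le_of_lt (trunc_pos hΔ M (hc.1 k)))
    (fun k => ?_) hc.2.1.isPreconnected hc.2.2.1 hc.2.2.2
  intro p hp q hq
  exact le_trans (dyadicArc_dist_le _ _ p hp q hq) (trunc_lower hΔ M _ _ (hc.1 k))

lemma fullChain (z w : AddCircle (1:ℝ)) :
    IsDyadicChain 0 (fun _ => (0, 0)) z w := by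
  have harc : ∀ x : AddCircle (1:ℝ), x ∈ dyadicArc 0 0 := by
    intro x
    exact ⟨circRep x, by simpa [Set.mem_Icc] using Set.Ico_subset_Icc_self (circRep_mem x),
      coe_circRep x⟩
  refine ⟨fun k => by norm_num, ?_, ?_, ?_⟩
  · simp only [Set.iUnion_const]
    exact dyadicArc_isConnected 0 0
  · exact Set.mem_iUnion.2 ⟨0, harc z⟩
  · exact Set.mem_iUnion.2 ⟨0, harc w⟩

lemma chainSums_nonempty (Δ' : ℕ → ℕ → ℝ) (z w : AddCircle (1:ℝ)) :
    (chainSums Δ' z w).Nonempty :=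
  ⟨_, 0, fun _ => (0, 0), fullChain z w, rfl⟩

lemma chainSums_nonneg {Δ' : ℕ → ℕ → ℝ} (h : ∀ k j, j < 2 ^ k → 0 ≤ Δ' k j)
    {z w : AddCircle (1:ℝ)} : ∀ s ∈ chainSums Δ' z w, 0 ≤ s := by
  rintro s ⟨N, c, hc, rfl⟩
  exact Finset.sum_nonneg fun k _ => h _ _ (hc.1 k)

lemma dist_le_dOf_trunc {Δ : ℕ → ℕ → ℝ} (hΔ : IsS1 Δ) (M : ℕ) (z w : AddCircle (1:ℝ)) :
    dist z w ≤ dOf (trunc Δ M) z w := by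
  apply le_csInf (chainSums_nonempty _ z w)
  rintro s ⟨N, c, hc, rfl⟩
  exact dist_le_chainSum hΔ M hc

lemma dOf_nonneg {Δ' : ℕ → ℕ → ℝ} (h : ∀ k j, j < 2 ^ k → 0 ≤ Δ' k j)
    (z w : AddCircle (1:ℝ)) : 0 ≤ dOf Δ' z w :=
  Real.sInf_nonneg (chainSums_nonneg h)

end Aux2
section Aux3
set_option linter.unusedSectionVars false
open Set

lemma coe_int_add (q : ℤ) (u : ℝ) : ((u + q : ℝ) : AddCircle (1:ℝ)) = (u : AddCircle (1:ℝ)) := by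
  have h : ((q : ℝ) : AddCircle (1:ℝ)) = 0 := (AddCircle.coe_eq_zero_iff 1).2 ⟨q, by simp⟩
  push_cast
  rw [AddCircle.coe_add, h, add_zero]

lemma arc_shift (a b : ℝ) (q : ℤ) :
    (fun r : ℝ => (r : AddCircle (1:ℝ))) '' Set.Icc (a - q) (b - q) =
      (fun r : ℝ => (r : AddCircle (1:ℝ))) '' Set.Icc a b := by
  ext x
  constructor
  · rintro ⟨u, hu, rfl⟩
    exact ⟨u + q, ⟨by linarith [hu.1], by linarith [hu.2]⟩, coe_int_add q u⟩
  · rintro ⟨u, hu, rfl⟩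
    refine ⟨u - q, ⟨by linarith [hu.1], by linarith [hu.2]⟩, ?_⟩
    have h := coe_int_add q (u - q)
    simpa using h

lemma dyadicArc_int (n : ℕ) (j0 : ℤ) :
    (fun r : ℝ => (r : AddCircle (1:ℝ))) '' Set.Icc ((j0:ℝ)/2^n) (((j0:ℝ)+1)/2^n) =
      dyadicArc n (j0 % 2^n).toNat := by
  set q := j0 / 2^n with hq
  have hmod : (j0 % 2^n) = j0 - 2^n * q := Int.emod_def j0 (2^n)
  have hnn : (0:ℤ) ≤ j0 % 2^n := Int.emod_nonneg j0 (by positivity)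
  have hcast : (((j0 % 2^n).toNat : ℝ)) = (j0:ℝ) - 2^n * q := by
    rw [← Int.cast_natCast, Int.toNat_of_nonneg hnn, hmod]
    push_cast; ring
  rw [dyadicArc, hcast]
  have h1 : ((j0:ℝ) - 2^n * q) / 2^n = (j0:ℝ)/2^n - q := by field_simp
  have h2 : ((j0:ℝ) - 2^n * q + 1) / 2^n = ((j0:ℝ)+1)/2^n - q := by field_simp; ring
  rw [h1, h2, arc_shift]

lemma toNat_emod_lt (j0 : ℤ) (n : ℕ) : (j0 % 2^n).toNat < 2^n := by
  have h1 : j0 % 2^n < 2^n := Int.emod_lt_of_pos j0 (by positivity)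
  have h2 : ((2:ℤ)^n) = ((2^n : ℕ) : ℤ) := by push_cast; ring
  omega

lemma dist_circ_eq (t s : ℝ) :
    dist ((t:ℝ) : AddCircle (1:ℝ)) ((s:ℝ) : AddCircle (1:ℝ)) = |t - s - round (t - s)| := by
  rw [dist_eq_norm]
  have h : ((t:ℝ) : AddCircle (1:ℝ)) - ((s:ℝ) : AddCircle (1:ℝ))
      = (((t - s : ℝ)) : AddCircle (1:ℝ)) := by norm_cast
  rw [h, AddCircle.norm_eq]
  simp

lemma two_arc_chain (n : ℕ) (x y : AddCircle (1:ℝ)) (hxy : dist x y < (1/2:ℝ)^n) :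
    ∃ c : Fin 2 → ℕ × ℕ, IsDyadicChain 1 c x y ∧ ∀ k, (c k).1 = n := by
  have h2n : (0:ℝ) < 2^n := by positivity
  set t := circRep x with ht
  set s0 := circRep y with hs0
  have hxt : ((t:ℝ) : AddCircle (1:ℝ)) = x := coe_circRep x
  have hys0 : ((s0:ℝ) : AddCircle (1:ℝ)) = y := coe_circRep y
  set s : ℝ := s0 + round (t - s0) with hs
  have hys : ((s:ℝ) : AddCircle (1:ℝ)) = y := by rw [hs, coe_int_add]; exact hys0
  have hts : |t - s| < (1/2:ℝ)^n := by
    have hd := dist_circ_eq t s0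
    rw [hxt, hys0] at hd
    have h' : t - s = t - s0 - round (t - s0) := by rw [hs]; ring
    rw [h', ← hd]; exact hxy
  set r := min t s with hr
  set j0 := ⌊r * 2^n⌋ with hj0
  have hj0le : (j0:ℝ) ≤ r * 2^n := Int.floor_le _
  have hj0lt : r * 2^n < j0 + 1 := Int.lt_floor_add_one _
  have hE : (1/2:ℝ)^n * 2^n = 1 := by rw [← mul_pow]; norm_num
  have hA : |t - s| * 2^n < 1 := by
    calc |t - s| * 2^n < (1/2:ℝ)^n * 2^n := by gcongr
      _ = 1 := hE
  have habs : t ≤ r + |t - s| ∧ s ≤ r + |t - s| := by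
    rcases min_cases t s with ⟨hm, hle⟩ | ⟨hm, hle⟩ <;>
      constructor <;> rw [hr, hm] <;>
      [linarith [abs_nonneg (t-s)]; linarith [neg_abs_le (t-s)];
       linarith [le_abs_self (t-s)]; linarith [abs_nonneg (t-s)]]
  have htmem : t ∈ Set.Icc ((j0:ℝ)/2^n) (((j0:ℝ)+2)/2^n) := by
    constructor
    · rw [div_le_iff₀ h2n]
      have : (j0:ℝ) ≤ t * 2^n := le_trans hj0le (by
        have : r ≤ t := min_le_left t s
        nlinarith)
      linarith
    · rw [le_div_iff₀ h2n]
      have hmul : t * 2^n ≤ r * 2^n + |t - s| * 2^n := by nlinarith [habs.1, h2n.le]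
      linarith
  have hsmem : s ∈ Set.Icc ((j0:ℝ)/2^n) (((j0:ℝ)+2)/2^n) := by
    constructor
    · rw [div_le_iff₀ h2n]
      have : (j0:ℝ) ≤ s * 2^n := le_trans hj0le (by
        have : r ≤ s := min_le_right t s
        nlinarith)
      linarith
    · rw [le_div_iff₀ h2n]
      have hmul : s * 2^n ≤ r * 2^n + |t - s| * 2^n := by nlinarith [habs.2, h2n.le]
      linarith
  set j1 := (j0 % 2^n).toNat with hj1
  set j2 := ((j0 + 1) % 2^n).toNat with hj2
  set c : Fin 2 → ℕ × ℕ := fun k => if k = 0 then (n, j1) else (n, j2) with hc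
  have harcA : dyadicArc n j1
      = (fun r : ℝ => (r : AddCircle (1:ℝ))) '' Set.Icc ((j0:ℝ)/2^n) (((j0:ℝ)+1)/2^n) :=
    (dyadicArc_int n j0).symm
  have harcB : dyadicArc n j2
      = (fun r : ℝ => (r : AddCircle (1:ℝ))) '' Set.Icc (((j0:ℝ)+1)/2^n) (((j0:ℝ)+2)/2^n) := by
    rw [← dyadicArc_int n (j0 + 1)]
    push_cast
    ring_nf
  have hUnion : (⋃ k, dyadicArc (c k).1 (c k).2) = dyadicArc n j1 ∪ dyadicArc n j2 := by
    ext u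
    simp only [Set.mem_iUnion, Set.mem_union, Fin.exists_fin_two, hc]
    norm_num
  refine ⟨c, ⟨?_, ?_, ?_, ?_⟩, ?_⟩
  · intro k
    rcases Fin.exists_fin_two.2 (Or.inl rfl) with _
    by_cases hk : k = 0 <;> simp [hc, hk, hj1, hj2, toNat_emod_lt] <;> exact Int.emod_lt_of_pos _ (by positivity)
  · rw [hUnion]
    apply IsConnected.union
    · refine ⟨(((((j0:ℝ)+1)/2^n : ℝ)) : AddCircle (1:ℝ)), ?_, ?_⟩
      · rw [harcA]
        exact ⟨((j0:ℝ)+1)/2^n, ⟨by gcongr <;> linarith, le_refl _⟩, rfl⟩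
      · rw [harcB]
        exact ⟨((j0:ℝ)+1)/2^n, ⟨le_refl _, by gcongr <;> linarith⟩, rfl⟩
    · rw [harcA]; exact (isConnected_Icc (by gcongr <;> linarith)).image
        _ (AddCircle.continuous_mk' 1).continuousOn
    · rw [harcB]; exact (isConnected_Icc (by gcongr <;> linarith)).image
        _ (AddCircle.continuous_mk' 1).continuousOn
  · rw [hUnion]
    rcases le_total t (((j0:ℝ)+1)/2^n) with hcase | hcase
    · exact Or.inl (harcA ▸ ⟨t, ⟨htmem.1, hcase⟩, hxt⟩)
    · exact Or.inr (harcB ▸ ⟨t, ⟨hcase, htmem.2⟩, hxt⟩)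
  · rw [hUnion]
    rcases le_total s (((j0:ℝ)+1)/2^n) with hcase | hcase
    · exact Or.inl (harcA ▸ ⟨s, ⟨hsmem.1, hcase⟩, hys⟩)
    · exact Or.inr (harcB ▸ ⟨s, ⟨hcase, hsmem.2⟩, hys⟩)
  · intro k
    by_cases hk : k = 0 <;> simp [hc, hk]

lemma bddBelow_chainSums {Δ : ℕ → ℕ → ℝ} (hΔ : IsS1 Δ) (x y : AddCircle (1:ℝ)) :
    BddBelow (chainSums Δ x y) :=
  ⟨0, fun s hs => chainSums_nonneg (fun k j hj => (hΔ.pos' hj).le) s hs⟩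

lemma dOf_small {Δ : ℕ → ℕ → ℝ} (hΔ : IsS1 Δ) {ε : ℝ} (hε : 0 < ε) :
    ∃ δ > 0, ∀ x y : AddCircle (1:ℝ), dist x y < δ → dOf Δ x y < ε := by
  obtain ⟨N, hN⟩ := hΔ.2.2.2 (ε/2) (by linarith)
  refine ⟨(1/2:ℝ)^N, by positivity, fun x y hxy => ?_⟩
  obtain ⟨c, hc, hlev⟩ := two_arc_chain N x y hxy
  have hsum : ∑ k, Δ (c k).1 (c k).2 < ε := by
    rw [Fin.sum_univ_two]
    have h0 := hN (c 0).1 (by rw [hlev 0]) (c 0).2 (hc.1 0)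
    have h1 := hN (c 1).1 (by rw [hlev 1]) (c 1).2 (hc.1 1)
    linarith
  have hle : dOf Δ x y ≤ ∑ k, Δ (c k).1 (c k).2 :=
    csInf_le (bddBelow_chainSums hΔ x y) ⟨1, c, hc, rfl⟩
  linarith

end Aux3
section Aux4
set_option linter.unusedSectionVars false
open Set Filter Topology

lemma foldPhi_continuous : Continuous foldPhi := by
  unfold foldPhi
  apply Continuous.if_le
  · exact continuous_const.mul continuous_id
  · apply Continuous.if_le
    · exact continuous_const.sub (continuous_const.mul continuous_id)
    · exact (continuous_const.mul continuous_id).sub continuous_const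
    · exact continuous_id
    · exact continuous_const
    · intro x hx; rw [hx]; norm_num
  · exact continuous_id
  · exact continuous_const
  · intro x hx; rw [hx]; norm_num

lemma foldPhi_zero : foldPhi 0 = 0 := by norm_num [foldPhi]

lemma foldPhi_one : foldPhi 1 = 1 := by norm_num [foldPhi]

/-- Auxiliary: the branch function on one dyadic arc. -/
def gAux (Δ : ℕ → ℕ → ℝ) (k : ℕ) (j : ℕ) (s : ℝ) : ℝ :=
  if Δ (k + 1) (2 * j) = Δ k j then foldPhi s else s

lemma gAux_continuous (Δ : ℕ → ℕ → ℝ) (k j : ℕ) : Continuous (gAux Δ k j) := by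
  unfold gAux
  split_ifs
  · exact foldPhi_continuous
  · exact continuous_id

lemma gAux_zero (Δ : ℕ → ℕ → ℝ) (k j : ℕ) : gAux Δ k j 0 = 0 := by
  unfold gAux; split_ifs <;> simp [foldPhi_zero]

lemma gAux_one (Δ : ℕ → ℕ → ℝ) (k j : ℕ) : gAux Δ k j 1 = 1 := by
  unfold gAux; split_ifs <;> simp [foldPhi_one]

/-- Real lift of the folding map `f_k`, at scale `2^k`. -/
def gFun (Δ : ℕ → ℕ → ℝ) (k : ℕ) (u : ℝ) : ℝ :=
  (⌊u⌋ : ℝ) + gAux Δ k ((⌊u⌋ % ((2:ℤ)^k)).toNat) (u - ⌊u⌋)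

lemma gFun_continuous (Δ : ℕ → ℕ → ℝ) (k : ℕ) : Continuous (gFun Δ k) := by
  rw [continuous_iff_continuousAt]
  intro a
  have hcont : ∀ z : ℤ, Continuous fun u : ℝ =>
      ((z:ℝ) + gAux Δ k ((z % ((2:ℤ)^k)).toNat) (u - z)) :=
    fun z => continuous_const.add ((gAux_continuous Δ k _).comp (continuous_id.sub continuous_const))
  rcases eq_or_ne ((⌊a⌋ : ℝ)) a with heq | hne
  · -- a is an integer; glue left and right limits
    set z := ⌊a⌋ with hz
    have hga : gFun Δ k a = (z:ℝ) := by
      rw [gFun, ← hz, heq, sub_self, gAux_zero, add_zero]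
    rw [ContinuousAt, ← nhdsLT_sup_nhdsGE a, tendsto_sup]
    constructor
    · -- from the left
      have hmem : Set.Ico ((z:ℝ) - 1) a ∈ 𝓝[<] a := by
        apply Ico_mem_nhdsLT_of_mem
        constructor
        · linarith [heq.symm ▸ (by norm_num : (z:ℝ) - 1 < (z:ℝ))]
        · exact le_refl a
      have heq' : ∀ u ∈ Set.Ico ((z:ℝ) - 1) a, gFun Δ k u =
          (((z - 1 : ℤ)):ℝ) + gAux Δ k (((z-1) % ((2:ℤ)^k)).toNat) (u - ((z - 1:ℤ):ℝ)) := by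
        intro u hu
        have hfl : ⌊u⌋ = z - 1 := by
          apply Int.floor_eq_iff.2
          constructor
          · push_cast; exact hu.1
          · push_cast; rw [← heq] at hu; push_cast at hu; linarith [hu.2]
        rw [gFun, hfl]
      have hbase : Tendsto (fun u : ℝ =>
          (((z - 1 : ℤ)):ℝ) + gAux Δ k (((z-1) % ((2:ℤ)^k)).toNat) (u - ((z - 1:ℤ):ℝ)))
          (𝓝[<] a) (𝓝 (gFun Δ k a)) := by
        have h1 := ((hcont (z-1)).tendsto a).mono_left (nhdsWithin_le_nhds (s := Set.Iio a))
        have h2 : ((z - 1:ℤ):ℝ) + gAux Δ k (((z-1) % ((2:ℤ)^k)).toNat) (a - ((z - 1:ℤ):ℝ))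
            = gFun Δ k a := by
          have : a - ((z - 1:ℤ):ℝ) = 1 := by push_cast; rw [← heq]; ring
          rw [this, gAux_one, hga]; push_cast; ring
        rwa [h2] at h1
      apply hbase.congr'
      filter_upwards [hmem] with u hu using (heq' u hu).symm
    · -- from the right
      have hmem : Set.Ico a ((z:ℝ) + 1) ∈ 𝓝[≥] a := by
        apply Ico_mem_nhdsGE_of_mem
        constructor
        · exact le_refl a
        · rw [← heq]; norm_num
      have heq' : ∀ u ∈ Set.Ico a ((z:ℝ) + 1), gFun Δ k u =
          ((z:ℝ)) + gAux Δ k ((z % ((2:ℤ)^k)).toNat) (u - (z:ℝ)) := by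
        intro u hu
        have hfl : ⌊u⌋ = z := by
          apply Int.floor_eq_iff.2
          constructor
          · rw [heq]; exact hu.1
          · push_cast; exact hu.2
        rw [gFun, hfl]
      have hbase : Tendsto (fun u : ℝ =>
          ((z:ℝ)) + gAux Δ k ((z % ((2:ℤ)^k)).toNat) (u - (z:ℝ)))
          (𝓝[≥] a) (𝓝 (gFun Δ k a)) := by
        have h1 := ((hcont z).tendsto a).mono_left (nhdsWithin_le_nhds (s := Set.Ici a))
        have h2 : ((z:ℝ)) + gAux Δ k ((z % ((2:ℤ)^k)).toNat) (a - (z:ℝ)) = gFun Δ k a := by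
          rw [heq] at hga ⊢
          rw [sub_self, gAux_zero, add_zero, hga]
        rwa [h2] at h1
      apply hbase.congr'
      filter_upwards [hmem] with u hu using (heq' u hu).symm
  · -- a is not an integer
    set z := ⌊a⌋ with hz
    have hmem : Set.Ioo ((z:ℝ)) ((z:ℝ) + 1) ∈ 𝓝 a := by
      apply Ioo_mem_nhds
      · rcases lt_or_eq_of_le (Int.floor_le a) with h | h
        · exact h
        · exact absurd h hne
      · exact Int.lt_floor_add_one a
    have heq' : ∀ u ∈ Set.Ioo ((z:ℝ)) ((z:ℝ) + 1), gFun Δ k u =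
        ((z:ℝ)) + gAux Δ k ((z % ((2:ℤ)^k)).toNat) (u - (z:ℝ)) := by
      intro u hu
      have hfl : ⌊u⌋ = z := by
        apply Int.floor_eq_iff.2
        exact ⟨hu.1.le, by push_cast; exact hu.2⟩
      rw [gFun, hfl]
    have : ContinuousAt (fun u : ℝ =>
        ((z:ℝ)) + gAux Δ k ((z % ((2:ℤ)^k)).toNat) (u - (z:ℝ))) a := (hcont z).continuousAt
    apply this.congr
    filter_upwards [hmem] with u hu
    exact (heq' u hu).symm

lemma gFun_shift (Δ : ℕ → ℕ → ℝ) (k : ℕ) (u : ℝ) (z : ℤ) :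
    gFun Δ k (u + (z * 2^k : ℤ)) = gFun Δ k u + (z * 2^k : ℤ) := by
  have hfl : ⌊u + ((z * 2^k : ℤ) : ℝ)⌋ = ⌊u⌋ + z * 2^k := Int.floor_add_intCast u _
  rw [gFun, gFun, hfl]
  have hmod : (⌊u⌋ + z * 2^k) % ((2:ℤ)^k) = ⌊u⌋ % ((2:ℤ)^k) := by
    simp [Int.add_mul_emod_self_left]
  rw [hmod]
  push_cast
  ring_nf

end Aux4
section Aux5
set_option linter.unusedSectionVars false
open Set Filter Topology

lemma foldMap_coe (Δ : ℕ → ℕ → ℝ) (k : ℕ) (t : ℝ) :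
    foldMap Δ k ((t:ℝ) : AddCircle (1:ℝ)) = ((gFun Δ k (t * 2^k) / 2^k : ℝ) : AddCircle (1:ℝ)) := by
  have h2k : (0:ℝ) < 2^k := by positivity
  set t₀ := Int.fract t with ht₀
  have htdec : t = t₀ + (⌊t⌋ : ℝ) := by rw [ht₀, Int.fract]; ring
  have hmk : ((t:ℝ) : AddCircle (1:ℝ)) = ((t₀:ℝ) : AddCircle (1:ℝ)) := by
    conv_lhs => rw [htdec]
    exact coe_int_add ⌊t⌋ t₀
  have hrep0 : circRep ((t₀:ℝ) : AddCircle (1:ℝ)) = t₀ :=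
    circRep_coe ⟨Int.fract_nonneg t, Int.fract_lt_one t⟩
  have hshift : gFun Δ k (t * 2^k) = gFun Δ k (t₀ * 2^k) + ((⌊t⌋ * (2:ℤ)^k : ℤ) : ℝ) := by
    have h1 : t * 2^k = t₀ * 2^k + ((⌊t⌋ * (2:ℤ)^k : ℤ) : ℝ) := by
      have hf : (⌊t⌋ : ℝ) = t - t₀ := by rw [ht₀, Int.fract]; ring
      push_cast
      rw [hf]
      ring
    rw [h1, gFun_shift]
  have hmkG : ((gFun Δ k (t * 2^k) / 2^k : ℝ) : AddCircle (1:ℝ))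
      = ((gFun Δ k (t₀ * 2^k) / 2^k : ℝ) : AddCircle (1:ℝ)) := by
    rw [hshift]
    have h2 : (gFun Δ k (t₀ * 2^k) + ((⌊t⌋ * (2:ℤ)^k : ℤ) : ℝ)) / 2^k
        = gFun Δ k (t₀ * 2^k) / 2^k + ((⌊t⌋:ℤ) : ℝ) := by
      push_cast
      field_simp
    rw [h2]
    exact coe_int_add ⌊t⌋ _
  rw [hmk, hmkG]
  -- now both sides only involve t₀
  have hu0 : 0 ≤ t₀ * 2^k := mul_nonneg (Int.fract_nonneg t) h2k.le
  have hu1 : t₀ * 2^k < 2^k := by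
    have := Int.fract_lt_one t
    nlinarith
  set j : ℕ := ⌊t₀ * 2^k⌋₊ with hj
  have hjz : ⌊t₀ * 2^k⌋ = (j:ℤ) := by
    rw [hj, ← Int.floor_toNat, Int.toNat_of_nonneg (Int.floor_nonneg.2 hu0)]
  have hjlt : (⌊t₀ * 2^k⌋ : ℤ) < (2:ℤ)^k := by
    apply Int.floor_lt.2
    push_cast
    exact hu1
  have hmod : (⌊t₀ * 2^k⌋ % ((2:ℤ)^k)).toNat = j := by
    rw [Int.emod_eq_of_lt (Int.floor_nonneg.2 hu0) hjlt, hjz, Int.toNat_natCast]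
  have hg : gFun Δ k (t₀ * 2^k) = (j:ℝ) + gAux Δ k j (t₀ * 2^k - (j:ℝ)) := by
    rw [gFun, hmod, hjz]
    push_cast
    ring_nf
  rw [foldMap]
  simp only [hrep0]
  rw [← hj]
  split_ifs with hcond
  · rw [hg, gAux, if_pos hcond]
  · rw [hg, gAux, if_neg hcond]
    have h3 : ((j:ℝ) + (t₀ * 2^k - (j:ℝ))) / 2^k = t₀ := by
      field_simp
      ring
    rw [h3]

lemma foldMap_continuous (Δ : ℕ → ℕ → ℝ) (k : ℕ) : Continuous (foldMap Δ k) := by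
  refine (isQuotientMap_quotient_mk').continuous_iff.mpr ?_
  show Continuous fun t : ℝ => foldMap Δ k ((t:ℝ) : AddCircle (1:ℝ))
  simp only [foldMap_coe]
  exact (AddCircle.continuous_mk' 1).comp
    (((gFun_continuous Δ k).comp (continuous_id.mul continuous_const)).div_const _)

lemma Fchain_continuous (Δ : ℕ → ℕ → ℝ) (m n : ℕ) : Continuous (Fchain Δ m n) := by
  induction n with
  | zero =>
    rw [Fchain]
    split_ifs
    · exact foldMap_continuous Δ 0
    · exact continuous_id
  | succ n ih =>
    rw [Fchain]
    split_ifs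
    · exact ih.comp (foldMap_continuous Δ (n+1))
    · exact foldMap_continuous Δ (n+1)
    · exact continuous_id

lemma Fchain_comp (Δ : ℕ → ℕ → ℝ) {m n : ℕ} (hmn : m ≤ n) :
    ∀ n', n + 1 ≤ n' → Fchain Δ m n' = Fchain Δ m n ∘ Fchain Δ (n+1) n' := by
  intro n' hn'
  induction n' with
  | zero => omega
  | succ n' ih =>
    rcases Nat.lt_or_ge (n+1) (n'+1) with h | h
    · have hn'1 : n + 1 ≤ n' := by omega
      rw [Fchain, if_pos (by omega : m ≤ n'), ih hn'1]
      conv_rhs => rw [Fchain, if_pos (by omega : n+1 ≤ n')]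
      rfl
    · have hnn : n' = n := by omega
      subst hnn
      rw [Fchain, if_pos hmn]
      conv_rhs => rw [Fchain, if_neg (by omega : ¬ (n'+1 ≤ n')), if_pos rfl]

end Aux5
section Aux6
set_option linter.unusedSectionVars false
open Set Filter Topology

lemma dptsAll_dense : Dense DptsAll := by
  intro x
  rw [Metric.mem_closure_iff]
  intro ε hε
  obtain ⟨K, hK⟩ : ∃ K : ℕ, (1/2:ℝ)^K < ε := exists_pow_lt_of_lt_one hε (by norm_num)
  have h2K : (0:ℝ) < 2^K := by positivity
  set t := circRep x with ht
  have ht0 : 0 ≤ t := (circRep_mem x).1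
  set j : ℕ := ⌊t * 2^K⌋₊ with hj
  refine ⟨(((j : ℝ) / 2^K : ℝ) : AddCircle (1:ℝ)), Set.mem_iUnion.2 ⟨K, ⟨j, rfl⟩⟩, ?_⟩
  have hx : x = ((t:ℝ) : AddCircle (1:ℝ)) := (coe_circRep x).symm
  have hfl1 : (j:ℝ) ≤ t * 2^K := Nat.floor_le (by positivity)
  have hfl2 : t * 2^K < (j:ℝ) + 1 := Nat.lt_floor_add_one _
  calc dist x (((j : ℝ) / 2^K : ℝ) : AddCircle (1:ℝ))
      ≤ |t - (j:ℝ)/2^K| := by rw [hx]; exact dist_coe_le _ _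
    _ < (1/2:ℝ)^K := by
        rw [abs_of_nonneg (by rw [sub_nonneg, div_le_iff₀ h2K]; linarith)]
        rw [div_pow, one_pow, sub_lt_iff_lt_add, ← add_div, lt_div_iff₀ h2K]
        linarith
    _ < ε := hK

lemma dOf_tendsto_zero {Δ : ℕ → ℕ → ℝ} (hΔ : IsS1 Δ) (x : AddCircle (1:ℝ)) :
    Tendsto (fun y => dOf Δ x y) (𝓝 x) (𝓝 0) := by
  rw [Metric.tendsto_nhds]
  intro ε hε
  obtain ⟨δ, hδ, hsmall⟩ := dOf_small hΔ hε
  filter_upwards [Metric.ball_mem_nhds x hδ] with y hy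
  rw [Real.dist_eq, sub_zero, abs_of_nonneg (dOf_nonneg (fun k j hj => (hΔ.pos' hj).le) x y)]
  exact hsmall x y (by rw [dist_comm]; exact hy)

lemma limitMap_tendsto {Δ : ℕ → ℕ → ℝ} (hΔ : IsS1 Δ) {M : ℕ}
    {F : AddCircle (1:ℝ) → AddCircle (1:ℝ)} (hF : IsLimitMap Δ M F) (x : AddCircle (1:ℝ)) :
    Tendsto F (𝓝 x) (𝓝 (F x)) := by
  rw [tendsto_iff_dist_tendsto_zero]
  apply squeeze_zero (fun y => dist_nonneg) (fun y => ?_) (dOf_tendsto_zero hΔ x)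
  calc dist (F y) (F x) = dist (F x) (F y) := dist_comm _ _
    _ ≤ dOf (trunc Δ M) (F x) (F y) := dist_le_dOf_trunc hΔ M _ _
    _ ≤ dOf Δ x y := hF.1 x y

lemma dyadic_case {Δ : ℕ → ℕ → ℝ} {m n : ℕ} (hmn : m ≤ n)
    {Fm Fn1 : AddCircle (1:ℝ) → AddCircle (1:ℝ)}
    (hFm : IsLimitMap Δ m Fm) (hFn1 : IsLimitMap Δ (n + 1) Fn1)
    {y : AddCircle (1:ℝ)} (hy : y ∈ DptsAll) :
    Fchain Δ m n (Fn1 y) = Fm y := by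
  obtain ⟨N1, h1⟩ := hFn1.2 y hy
  obtain ⟨N2, h2⟩ := hFm.2 y hy
  set n' := max (max N1 N2) (n+1) with hn'
  have e1 : Fchain Δ (n+1) n' y = Fn1 y :=
    h1 n' (le_trans (le_max_left _ _) (le_max_left _ _))
  have e2 : Fchain Δ m n' y = Fm y :=
    h2 n' (le_trans (le_max_right _ _) (le_max_left _ _))
  have e3 : Fchain Δ m n' = Fchain Δ m n ∘ Fchain Δ (n+1) n' :=
    Fchain_comp Δ hmn n' (le_max_right _ _)
  calc Fchain Δ m n (Fn1 y) = Fchain Δ m n (Fchain Δ (n+1) n' y) := by rw [e1]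
    _ = Fchain Δ m n' y := by rw [e3]; rfl
    _ = Fm y := e2

end Aux6

/-- For all `m ≤ n` and every `x ∈ 𝕊`, `F_{m,n}(F_{n+1}(x)) = F_m(x)`. -/
theorem Fchain_comp_limitMap (Δ : ℕ → ℕ → ℝ) (hΔ : IsS1 Δ) (m n : ℕ) (hmn : m ≤ n)
    (Fm Fn1 : AddCircle (1 : ℝ) → AddCircle (1 : ℝ))
    (hFm : IsLimitMap Δ m Fm) (hFn1 : IsLimitMap Δ (n + 1) Fn1)
    (x : AddCircle (1 : ℝ)) :
    Fchain Δ m n (Fn1 x) = Fm x := by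
  have hnb : (nhdsWithin x DptsAll).NeBot :=
    mem_closure_iff_nhdsWithin_neBot.1 (dptsAll_dense x)
  have hA : Filter.Tendsto (fun y => Fchain Δ m n (Fn1 y)) (nhdsWithin x DptsAll)
      (nhds (Fchain Δ m n (Fn1 x))) :=
    (((Fchain_continuous Δ m n).tendsto _).comp (limitMap_tendsto hΔ hFn1 x)).mono_left
      nhdsWithin_le_nhds
  have hB : Filter.Tendsto Fm (nhdsWithin x DptsAll) (nhds (Fm x)) :=
    (limitMap_tendsto hΔ hFm x).mono_left nhdsWithin_le_nhds
  have heq : (fun y => Fchain Δ m n (Fn1 y)) =ᶠ[nhdsWithin x DptsAll] Fm := by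
    filter_upwards [eventually_mem_nhdsWithin] with y hy
    exact dyadic_case hmn hFm hFn1 hy
  exact tendsto_nhds_unique (hA.congr' heq) hB
end
end

section
/- There exists N* ∈ ℕ such that for all n ≥ N*, diam_Δ(W) ≤ diam_n(V_n) + δ, where diam_Δ denotes diameter with respect to d_Δ and diam_n denotes diameter with respect to d_n. -/
noncomputable section

open Set

namespace CircleAux

/-- The closed dyadic interval in `ℝ`. -/
def dIcc (m j : ℕ) : Set ℝ := Set.Icc ((j : ℝ) / 2 ^ m) (((j : ℝ) + 1) / 2 ^ m)

lemma dyadicArc_eq (m j : ℕ) :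
    dyadicArc m j = (fun r : ℝ => (r : AddCircle (1 : ℝ))) '' dIcc m j := rfl

lemma circRep_mem (x : AddCircle (1 : ℝ)) : circRep x ∈ Set.Ico (0 : ℝ) 1 := by
  have h := ((AddCircle.equivIco 1 0) x).2
  show ((AddCircle.equivIco 1 0) x).1 ∈ Set.Ico (0 : ℝ) 1
  simpa using h

lemma mk_circRep (x : AddCircle (1 : ℝ)) : ((circRep x : ℝ) : AddCircle (1 : ℝ)) = x := by
  have := (AddCircle.equivIco (1:ℝ) 0).symm_apply_apply x
  exact this

lemma circRep_coe {r : ℝ} (h : r ∈ Set.Ico (0 : ℝ) 1) :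
    circRep ((r : ℝ) : AddCircle (1 : ℝ)) = r := by
  unfold circRep
  rw [AddCircle.coe_equivIco_mk_apply]
  rw [div_one, Int.fract_eq_self.2 h, mul_one]

lemma coe_eq_coe_iff {r s : ℝ} :
    ((r : ℝ) : AddCircle (1 : ℝ)) = (s : ℝ) ↔ ∃ z : ℤ, r - s = z := by
  constructor
  · intro h
    have h' : r - s ∈ AddSubgroup.zmultiples (1 : ℝ) := by
      rwa [QuotientAddGroup.eq_iff_sub_mem] at h
    obtain ⟨z, hz⟩ := h'
    exact ⟨z, by simpa using hz.symm⟩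
  · rintro ⟨z, hz⟩
    have : r - s ∈ AddSubgroup.zmultiples (1 : ℝ) := ⟨z, by simpa using hz.symm⟩
    rwa [QuotientAddGroup.eq_iff_sub_mem]

lemma coe_eq_coe_of_mem {r s : ℝ} (hr : r ∈ Set.Icc (0:ℝ) 1) (hs : s ∈ Set.Ioo (0:ℝ) 1)
    (h : ((r : ℝ) : AddCircle (1 : ℝ)) = (s : ℝ)) : r = s := by
  obtain ⟨z, hz⟩ := coe_eq_coe_iff.1 h
  have h1 : (-1 : ℝ) < (z : ℝ) := by rw [← hz]; nlinarith [hr.1, hr.2, hs.1, hs.2]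
  have h2 : ((z : ℝ)) < 1 := by rw [← hz]; nlinarith [hr.1, hr.2, hs.1, hs.2]
  have h1' : (-1 : ℤ) < z := by exact_mod_cast h1
  have h2' : z < 1 := by exact_mod_cast h2
  have hz0 : z = 0 := by omega
  rw [hz0] at hz
  simpa using sub_eq_zero.1 (by simpa using hz)

end CircleAux
namespace CircleAux

lemma pow_split {n m : ℕ} (h : n ≤ m) : (2:ℝ)^m = 2^n * 2^(m-n) := by
  rw [← pow_add]; congr 1; omega

lemma anc_idx_lt {n m j : ℕ} (h : n ≤ m) (hj : j < 2^m) : j / 2^(m-n) < 2^n := by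
  apply Nat.div_lt_of_lt_mul
  calc j < 2^m := hj
  _ = 2^(m-n) * 2^n := by rw [← pow_add]; congr 1; omega

lemma dIcc_subset_anc {n m : ℕ} (h : n ≤ m) (j : ℕ) :
    dIcc m j ⊆ dIcc n (j / 2^(m-n)) := by
  set d := m - n with hd
  set q := j / 2^d with hq
  have h1 : q * 2^d ≤ j := Nat.div_mul_le_self j (2^d)
  have h2 : j + 1 ≤ (q+1) * 2^d := by
    have hp : 0 < 2^d := Nat.pow_pos (by norm_num)
    have e1 := Nat.div_add_mod j (2^d)
    have e2 := Nat.mod_lt j hp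
    calc j + 1 = 2^d * q + j % 2^d + 1 := by rw [hq, e1]
    _ ≤ 2^d * q + 2^d := by omega
    _ = (q+1) * 2^d := by ring
  have hm : (2:ℝ)^m = 2^n * 2^d := pow_split h
  have hpn : (0:ℝ) < 2^n := by positivity
  have hpd : (0:ℝ) < 2^d := by positivity
  apply Set.Icc_subset_Icc
  · rw [div_le_div_iff₀ hpn (by positivity), hm]
    have : ((q:ℝ) * 2^d) ≤ j := by exact_mod_cast h1
    nlinarith
  · rw [div_le_div_iff₀ (by positivity) hpn, hm]
    have : ((j:ℝ) + 1) ≤ (q+1) * 2^d := by exact_mod_cast h2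
    nlinarith

lemma dyadicArc_subset_anc {n m : ℕ} (h : n ≤ m) (j : ℕ) :
    dyadicArc m j ⊆ dyadicArc n (j / 2^(m-n)) := by
  rw [dyadicArc_eq, dyadicArc_eq]
  exact Set.image_mono (dIcc_subset_anc h j)

lemma dyadicArc_nonempty (m j : ℕ) : (dyadicArc m j).Nonempty := by
  refine ⟨((j:ℝ)/2^m : ℝ), ⟨(j:ℝ)/2^m, ?_, rfl⟩⟩
  constructor
  · exact le_refl _
  · have hpn : (0:ℝ) < 2^m := by positivity
    exact (div_le_div_iff_of_pos_right hpn).mpr (by linarith)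

lemma isConnected_dyadicArc (m j : ℕ) : IsConnected (dyadicArc m j) := by
  refine ⟨dyadicArc_nonempty m j, ?_⟩
  rw [dyadicArc_eq]
  exact (isPreconnected_Icc).image _ (AddCircle.continuous_mk' 1).continuousOn

lemma floor_circRep_lt (x : AddCircle (1:ℝ)) (n : ℕ) : ⌊circRep x * 2^n⌋₊ < 2^n := by
  have h := (circRep_mem x).2
  have h0 := (circRep_mem x).1
  have : circRep x * 2^n < 2^n := by nlinarith [pow_pos (show (0:ℝ) < 2 by norm_num) n]
  rw [Nat.floor_lt (by positivity)]
  push_cast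
  exact this

lemma mem_dIco_floor (x : AddCircle (1:ℝ)) (n : ℕ) :
    circRep x ∈ Set.Ico ((⌊circRep x * 2^n⌋₊ : ℝ)/2^n) ((⌊circRep x * 2^n⌋₊ + 1 : ℝ)/2^n) := by
  have hpn : (0:ℝ) < 2^n := by positivity
  have h0 := (circRep_mem x).1
  constructor
  · rw [div_le_iff₀ hpn]
    exact Nat.floor_le (by positivity)
  · rw [lt_div_iff₀ hpn]
    exact Nat.lt_floor_add_one _

lemma mem_dyadicArc_self (x : AddCircle (1:ℝ)) (n : ℕ) :
    x ∈ dyadicArc n ⌊circRep x * 2^n⌋₊ := by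
  refine ⟨circRep x, ?_, mk_circRep x⟩
  have h := mem_dIco_floor x n
  exact ⟨h.1, le_of_lt h.2⟩

lemma dIoo_disjoint {n j1 j2 : ℕ} {z : ℝ}
    (h1 : z ∈ Set.Ioo ((j1:ℝ)/2^n) (((j1:ℝ)+1)/2^n))
    (h2 : z ∈ Set.Ioo ((j2:ℝ)/2^n) (((j2:ℝ)+1)/2^n)) : j1 = j2 := by
  have hpn : (0:ℝ) < 2^n := by positivity
  have a1 : (j1:ℝ) < z * 2^n := by have := h1.1; rw [div_lt_iff₀ hpn] at this; linarith
  have b1 : z * 2^n < (j1:ℝ) + 1 := by have := h1.2; rw [lt_div_iff₀ hpn] at this; linarith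
  have a2 : (j2:ℝ) < z * 2^n := by have := h2.1; rw [div_lt_iff₀ hpn] at this; linarith
  have b2 : z * 2^n < (j2:ℝ) + 1 := by have := h2.2; rw [lt_div_iff₀ hpn] at this; linarith
  have : ((j1:ℤ):ℝ) < (j2:ℤ) + 1 := by push_cast; push_cast at a2 b1; linarith
  have h21 : ((j2:ℤ):ℝ) < (j1:ℤ) + 1 := by push_cast; push_cast at a1 b2; linarith
  have e1 : (j1:ℤ) < j2 + 1 := by exact_mod_cast this
  have e2 : (j2:ℤ) < j1 + 1 := by exact_mod_cast h21
  omega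

end CircleAux
namespace CircleAux

lemma mem_dyadicArc_zero (x : AddCircle (1:ℝ)) : x ∈ dyadicArc 0 0 := by
  refine ⟨circRep x, ?_, mk_circRep x⟩
  have h := circRep_mem x
  simp only [dIcc, pow_zero, Nat.cast_zero, div_one, zero_add]
  exact ⟨h.1, by linarith [h.2]⟩

lemma isDyadicChain_full (x y : AddCircle (1:ℝ)) :
    IsDyadicChain 0 (fun _ => ((0 : ℕ), (0 : ℕ))) x y := by
  refine ⟨fun k => by norm_num, ?_, ?_, ?_⟩
  · rw [Set.iUnion_const]; exact isConnected_dyadicArc 0 0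
  · exact Set.mem_iUnion.2 ⟨0, mem_dyadicArc_zero x⟩
  · exact Set.mem_iUnion.2 ⟨0, mem_dyadicArc_zero y⟩

lemma chainSums_nonempty (Δ' : ℕ → ℕ → ℝ) (x y : AddCircle (1:ℝ)) :
    (chainSums Δ' x y).Nonempty :=
  ⟨Δ' 0 0, 0, fun _ => (0, 0), isDyadicChain_full x y, by simp⟩

/-- Nonnegativity of a weight on valid indices. -/
def ValidNonneg (Δ' : ℕ → ℕ → ℝ) : Prop := ∀ m j : ℕ, j < 2^m → 0 ≤ Δ' m j

lemma chainSums_mem_nonneg {Δ'} (hnn : ValidNonneg Δ') {x y s}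
    (hs : s ∈ chainSums Δ' x y) : 0 ≤ s := by
  obtain ⟨N, c, hc, rfl⟩ := hs
  exact Finset.sum_nonneg fun k _ => hnn _ _ (hc.1 k)

lemma bddBelow_chainSums {Δ'} (hnn : ValidNonneg Δ') (x y : AddCircle (1:ℝ)) :
    BddBelow (chainSums Δ' x y) :=
  ⟨0, fun s hs => chainSums_mem_nonneg hnn hs⟩

lemma dOf_nonneg {Δ'} (hnn : ValidNonneg Δ') (x y : AddCircle (1:ℝ)) :
    0 ≤ dOf Δ' x y :=
  le_csInf (chainSums_nonempty Δ' x y) (fun s hs => chainSums_mem_nonneg hnn hs)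

lemma dOf_le_of_mem_arc {Δ'} (hnn : ValidNonneg Δ') {m j : ℕ} (hj : j < 2^m)
    {x y : AddCircle (1:ℝ)} (hx : x ∈ dyadicArc m j) (hy : y ∈ dyadicArc m j) :
    dOf Δ' x y ≤ Δ' m j := by
  apply csInf_le (bddBelow_chainSums hnn x y)
  refine ⟨0, fun _ => (m, j), ⟨fun k => hj, ?_, ?_, ?_⟩, by simp⟩
  · rw [Set.iUnion_const]; exact isConnected_dyadicArc m j
  · exact Set.mem_iUnion.2 ⟨0, hx⟩
  · exact Set.mem_iUnion.2 ⟨0, hy⟩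

lemma dOf_le_zero_zero {Δ'} (hnn : ValidNonneg Δ') (x y : AddCircle (1:ℝ)) :
    dOf Δ' x y ≤ Δ' 0 0 :=
  dOf_le_of_mem_arc hnn (by norm_num) (mem_dyadicArc_zero x) (mem_dyadicArc_zero y)

lemma dOf_symm (Δ' : ℕ → ℕ → ℝ) (x y : AddCircle (1:ℝ)) : dOf Δ' x y = dOf Δ' y x := by
  unfold dOf
  congr 1
  ext s
  constructor <;> rintro ⟨N, c, ⟨h1, h2, h3, h4⟩, h5⟩ <;> exact ⟨N, c, ⟨h1, h2, h4, h3⟩, h5⟩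

lemma iUnion_fin_add {m n : ℕ} (g : Fin (m + n) → Set (AddCircle (1:ℝ))) :
    (⋃ i, g i) = (⋃ i : Fin m, g (Fin.castAdd n i)) ∪ ⋃ i : Fin n, g (Fin.natAdd m i) := by
  ext w
  simp only [Set.mem_iUnion, Set.mem_union]
  constructor
  · rintro ⟨⟨v, hv⟩, hw⟩
    by_cases hvm : v < m
    · left; exact ⟨⟨v, hvm⟩, by convert hw; rfl⟩
    · right
      refine ⟨⟨v - m, by omega⟩, ?_⟩
      convert hw using 2
      ext
      simp [Fin.natAdd]
      omega
  · rintro (⟨i, hw⟩ | ⟨i, hw⟩)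
    exacts [⟨_, hw⟩, ⟨_, hw⟩]

lemma dOf_triangle {Δ'} (hnn : ValidNonneg Δ') (x y z : AddCircle (1:ℝ)) :
    dOf Δ' x z ≤ dOf Δ' x y + dOf Δ' y z := by
  have key : ∀ s1 ∈ chainSums Δ' x y, ∀ s2 ∈ chainSums Δ' y z,
      dOf Δ' x z ≤ s1 + s2 := by
    rintro s1 ⟨N1, c1, hc1, rfl⟩ s2 ⟨N2, c2, hc2, rfl⟩
    have hcast : (N1 + 1 + N2) + 1 = (N1 + 1) + (N2 + 1) := by omega
    have hval : ∀ k' : Fin ((N1+1)+(N2+1)),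
        ((Fin.append c1 c2) k').2 < 2 ^ ((Fin.append c1 c2) k').1 := by
      intro k'
      refine Fin.addCases ?_ ?_ k'
      · intro i
        show ((Fin.append c1 c2) (Fin.castAdd _ i)).2 < 2 ^ ((Fin.append c1 c2) (Fin.castAdd _ i)).1
        rw [Fin.append_left]; exact hc1.1 i
      · intro i
        show ((Fin.append c1 c2) (Fin.natAdd _ i)).2 < 2 ^ ((Fin.append c1 c2) (Fin.natAdd _ i)).1
        rw [Fin.append_right]; exact hc2.1 i
    have hU : (⋃ k' : Fin ((N1+1)+(N2+1)), dyadicArc ((Fin.append c1 c2) k').1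
          ((Fin.append c1 c2) k').2)
        = (⋃ k, dyadicArc (c1 k).1 (c1 k).2) ∪ ⋃ k, dyadicArc (c2 k).1 (c2 k).2 := by
      rw [iUnion_fin_add]
      congr 1 <;>
        · apply Set.iUnion_congr
          intro i
          simp [Fin.append_left, Fin.append_right]
    have hUe : (⋃ k : Fin ((N1 + 1 + N2) + 1),
          dyadicArc (((Fin.append c1 c2) ∘ (finCongr hcast)) k).1
            (((Fin.append c1 c2) ∘ (finCongr hcast)) k).2)
        = ⋃ k' : Fin ((N1+1)+(N2+1)), dyadicArc ((Fin.append c1 c2) k').1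
            ((Fin.append c1 c2) k').2 :=
      (finCongr hcast).surjective.iUnion_comp
        (g := fun k' => dyadicArc ((Fin.append c1 c2) k').1 ((Fin.append c1 c2) k').2)
    apply csInf_le (bddBelow_chainSums hnn x z)
    refine ⟨N1 + 1 + N2, (Fin.append c1 c2) ∘ (finCongr hcast), ⟨?_, ?_, ?_, ?_⟩, ?_⟩
    · intro k
      exact hval (finCongr hcast k)
    · rw [hUe, hU]
      apply IsConnected.union ?_ hc1.2.1 hc2.2.1
      exact ⟨y, hc1.2.2.2, hc2.2.2.1⟩
    · rw [hUe, hU]; exact Set.mem_union_left _ hc1.2.2.1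
    · rw [hUe, hU]; exact Set.mem_union_right _ hc2.2.2.2
    · have e1 := Equiv.sum_comp (finCongr hcast)
        (fun k' => Δ' ((Fin.append c1 c2) k').1 ((Fin.append c1 c2) k').2)
      have e2 : ∑ k' : Fin ((N1+1)+(N2+1)),
            Δ' ((Fin.append c1 c2) k').1 ((Fin.append c1 c2) k').2
          = (∑ k, Δ' (c1 k).1 (c1 k).2) + ∑ k, Δ' (c2 k).1 (c2 k).2 := by
        rw [Fin.sum_univ_add]
        congr 1 <;>
          · apply Finset.sum_congr rfl
            intro i _
            simp [Fin.append_left, Fin.append_right]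
      calc (∑ k, Δ' (c1 k).1 (c1 k).2) + ∑ k, Δ' (c2 k).1 (c2 k).2
          = ∑ k' : Fin ((N1+1)+(N2+1)),
            Δ' ((Fin.append c1 c2) k').1 ((Fin.append c1 c2) k').2 := e2.symm
      _ = ∑ k : Fin ((N1 + 1 + N2) + 1),
            Δ' (((Fin.append c1 c2) ∘ (finCongr hcast)) k).1
              (((Fin.append c1 c2) ∘ (finCongr hcast)) k).2 := e1.symm
  have h2 : ∀ s1 ∈ chainSums Δ' x y, dOf Δ' x z - s1 ≤ dOf Δ' y z := by
    intro s1 hs1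
    apply le_csInf (chainSums_nonempty Δ' y z)
    intro s2 hs2
    linarith [key s1 hs1 s2 hs2]
  have h3 : dOf Δ' x z - dOf Δ' y z ≤ dOf Δ' x y := by
    apply le_csInf (chainSums_nonempty Δ' x y)
    intro s1 hs1
    linarith [h2 s1 hs1]
  linarith

end CircleAux
namespace CircleAux

lemma S1_nonneg {Δ} (hΔ : IsS1 Δ) : ValidNonneg Δ :=
  fun m j hj => le_of_lt (hΔ.2.1 m j hj)

lemma trunc_nonneg {Δ} (hΔ : IsS1 Δ) (n : ℕ) : ValidNonneg (trunc Δ n) := by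
  intro m j hj
  unfold trunc
  split
  · exact le_of_lt (hΔ.2.1 m j hj)
  · next h =>
    have := hΔ.2.1 n (j / 2^(m-n)) (anc_idx_lt (by omega) hj)
    positivity

lemma trunc_eq_of_le {Δ} {n m : ℕ} (h : m ≤ n) (j : ℕ) : trunc Δ n m j = Δ m j := by
  unfold trunc; rw [if_pos h]

lemma trunc_zero_zero {Δ} (hΔ : IsS1 Δ) (n : ℕ) : trunc Δ n 0 0 = 1 := by
  rw [trunc_eq_of_le (Nat.zero_le n)]; exact hΔ.1

lemma trunc_le_bound {Δ} (hΔ : IsS1 Δ) {n m : ℕ} (h : n ≤ m) {j : ℕ} (hj : j < 2^m)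
    {B : ℝ} (hB : ∀ i < 2^n, Δ n i ≤ B) : trunc Δ n m j ≤ B := by
  unfold trunc
  split
  · next h' =>
    have : m = n := le_antisymm h' h
    subst this
    exact hB j hj
  · have h1 : Δ n (j / 2^(m-n)) ≤ B := hB _ (anc_idx_lt (by omega) hj)
    have h2 : (1:ℝ) ≤ 2^(m-n) := by have := Nat.one_le_two_pow (n := m - n); exact_mod_cast this
    have h0 : 0 < Δ n (j / 2^(m-n)) := hΔ.2.1 n _ (anc_idx_lt (by omega) hj)
    calc Δ n (j / 2^(m-n)) / 2^(m-n) ≤ Δ n (j / 2^(m-n)) / 1 := by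
          apply div_le_div_of_nonneg_left (le_of_lt h0) (by norm_num) h2
    _ = Δ n (j / 2^(m-n)) := div_one _
    _ ≤ B := h1

lemma foldPhi_mem {s : ℝ} (h : s ∈ Set.Ico (0:ℝ) 1) : foldPhi s ∈ Set.Ico (0:ℝ) 1 := by
  unfold foldPhi
  obtain ⟨h0, h1⟩ := h
  split
  · next h' => constructor <;> [linarith; linarith]
  · split
    · next h1' h2' => constructor <;> [linarith [not_le.1 h1']; linarith [not_le.1 h1']]
    · next h1' h2' => constructor <;> [linarith [not_le.1 h2']; linarith]

lemma circRep_foldMap_mem (Δ : ℕ → ℕ → ℝ) {n k : ℕ} (hnk : n ≤ k) {j0 : ℕ}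
    (hj0 : j0 < 2^n) {y : AddCircle (1:ℝ)}
    (hy : circRep y ∈ Set.Ico ((j0:ℝ)/2^n) (((j0:ℝ)+1)/2^n)) :
    circRep (foldMap Δ k y) ∈ Set.Ico ((j0:ℝ)/2^n) (((j0:ℝ)+1)/2^n) := by
  unfold foldMap
  simp only []
  split
  swap
  · exact hy
  set t := circRep y with ht
  set j := ⌊t * 2^k⌋₊ with hjdef
  have htm := circRep_mem y
  have hpk : (0:ℝ) < 2^k := by positivity
  have hpn : (0:ℝ) < 2^n := by positivity
  have ht0 : 0 ≤ t * 2^k := by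
    have := htm.1; positivity
  have hs0 : (j:ℝ) ≤ t * 2^k := Nat.floor_le ht0
  have hs1 : t * 2^k < (j:ℝ) + 1 := Nat.lt_floor_add_one _
  have hphi := foldPhi_mem (s := t * 2^k - j) ⟨by linarith, by linarith⟩
  have hjk : j < 2^k := floor_circRep_lt y k
  have hr0 : (0:ℝ) ≤ ((j:ℝ) + foldPhi (t * 2^k - j)) / 2^k := by
    have := hphi.1; positivity
  have hr1 : ((j:ℝ) + foldPhi (t * 2^k - j)) / 2^k < 1 := by
    rw [div_lt_one hpk]
    have : (j:ℝ) + 1 ≤ 2^k := by exact_mod_cast hjk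
    linarith [hphi.2]
  rw [circRep_coe ⟨hr0, hr1⟩]
  -- j0 * 2^(k-n) ≤ j and j + 1 ≤ (j0+1) * 2^(k-n)
  have hsplit : (2:ℝ)^k = 2^n * 2^(k-n) := pow_split hnk
  have hlo : (j0 * 2^(k-n) : ℕ) ≤ j := by
    apply Nat.le_floor
    push_cast
    calc ((j0:ℝ) * 2^(k-n)) = (j0:ℝ)/2^n * 2^k := by
          rw [hsplit]; field_simp
    _ ≤ t * 2^k := by
          apply mul_le_mul_of_nonneg_right hy.1 (le_of_lt hpk)
  have hhi : j < ((j0+1) * 2^(k-n) : ℕ) := by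
    rw [hjdef, Nat.floor_lt ht0]
    push_cast
    calc t * 2^k < ((j0:ℝ)+1)/2^n * 2^k := by
          apply mul_lt_mul_of_pos_right hy.2 hpk
    _ = ((j0:ℝ)+1) * 2^(k-n) := by rw [hsplit]; field_simp
  constructor
  · rw [div_le_div_iff₀ hpn hpk]
    have : ((j0:ℝ) * 2^(k-n)) ≤ j := by exact_mod_cast hlo
    calc (j0:ℝ) * 2^k = (j0 * 2^(k-n)) * 2^n := by rw [hsplit]; ring
    _ ≤ (j:ℝ) * 2^n := by nlinarith
    _ ≤ ((j:ℝ) + foldPhi (t * 2^k - j)) * 2^n := by nlinarith [hphi.1]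
  · rw [div_lt_div_iff₀ hpk hpn]
    have hj1 : (j:ℝ) + 1 ≤ ((j0:ℝ)+1) * 2^(k-n) := by
      have : (j:ℝ) + 1 ≤ ((j0+1) * 2^(k-n) : ℕ) := by exact_mod_cast hhi
      push_cast at this; linarith
    have h2 : ((j:ℝ) + foldPhi (t * 2^k - j)) < (j:ℝ) + 1 := by linarith [hphi.2]
    calc ((j:ℝ) + foldPhi (t * 2^k - j)) * 2^n < ((j:ℝ)+1) * 2^n := by nlinarith
    _ ≤ (((j0:ℝ)+1) * 2^(k-n)) * 2^n := by nlinarith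
    _ = ((j0:ℝ)+1) * 2^k := by rw [hsplit]; ring

lemma circRep_Fchain_mem (Δ : ℕ → ℕ → ℝ) {n : ℕ} {j0 : ℕ} (hj0 : j0 < 2^n) :
    ∀ m, n ≤ m → ∀ y : AddCircle (1:ℝ),
      circRep y ∈ Set.Ico ((j0:ℝ)/2^n) (((j0:ℝ)+1)/2^n) →
      circRep (Fchain Δ n m y) ∈ Set.Ico ((j0:ℝ)/2^n) (((j0:ℝ)+1)/2^n) := by
  intro m
  induction m with
  | zero =>
    intro hn y hy
    have hn0 : n = 0 := Nat.le_zero.1 hn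
    subst hn0
    show circRep (Fchain Δ 0 0 y) ∈ _
    have : Fchain Δ 0 0 = foldMap Δ 0 := by simp [Fchain]
    rw [this]
    exact circRep_foldMap_mem Δ (le_refl 0) hj0 hy
  | succ m ih =>
    intro hn y hy
    by_cases hnm : n ≤ m
    · have : Fchain Δ n (m+1) = Fchain Δ n m ∘ foldMap Δ (m+1) := by
        simp [Fchain, hnm]
      rw [this]
      exact ih hnm _ (circRep_foldMap_mem Δ (by omega) hj0 hy)
    · have hn1 : n = m + 1 := by omega
      have : Fchain Δ n (m+1) = foldMap Δ (m+1) := by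
        simp [Fchain, hnm, hn1]
      rw [this]
      rw [hn1] at hj0 hy ⊢
      exact circRep_foldMap_mem Δ (le_refl _) hj0 hy

lemma mem_arc_of_circRep {n j0 : ℕ} {w : AddCircle (1:ℝ)}
    (h : circRep w ∈ Set.Ico ((j0:ℝ)/2^n) (((j0:ℝ)+1)/2^n)) : w ∈ dyadicArc n j0 :=
  ⟨circRep w, ⟨h.1, le_of_lt h.2⟩, mk_circRep w⟩

lemma disp_dyadic {Δ} {n : ℕ} {Fn : AddCircle (1:ℝ) → AddCircle (1:ℝ)}
    (hFn : IsLimitMap Δ n Fn) {x : AddCircle (1:ℝ)} (hx : x ∈ DptsAll) :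
    ∃ j0, j0 < 2^n ∧ x ∈ dyadicArc n j0 ∧ Fn x ∈ dyadicArc n j0 := by
  obtain ⟨N, hN⟩ := hFn.2 x hx
  set m := max N n with hm
  have hFx : Fchain Δ n m x = Fn x := hN m (le_max_left _ _)
  set j0 := ⌊circRep x * 2^n⌋₊ with hj0def
  have hj0 : j0 < 2^n := floor_circRep_lt x n
  refine ⟨j0, hj0, mem_dyadicArc_self x n, ?_⟩
  rw [← hFx]
  apply mem_arc_of_circRep
  apply circRep_Fchain_mem Δ hj0 m (le_max_right _ _)
  exact mem_dIco_floor x n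

lemma leftPt_mem_arc (n j : ℕ) : leftPt n j ∈ dyadicArc n j := by
  refine ⟨(j:ℝ)/2^n, ⟨le_refl _, ?_⟩, rfl⟩
  have hpn : (0:ℝ) < 2^n := by positivity
  exact (div_le_div_iff_of_pos_right hpn).mpr (by linarith)

lemma leftPt_dyadic (n j : ℕ) : leftPt n j ∈ DptsAll :=
  Set.mem_iUnion.2 ⟨n, ⟨j, rfl⟩⟩

lemma disp_bound {Δ} (hΔ : IsS1 Δ) {n : ℕ} {Fn : AddCircle (1:ℝ) → AddCircle (1:ℝ)}
    (hFn : IsLimitMap Δ n Fn) {B : ℝ} (hB : ∀ i < 2^n, Δ n i ≤ B)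
    (x : AddCircle (1:ℝ)) : dOf (trunc Δ n) x (Fn x) ≤ 3 * B := by
  set j1 := ⌊circRep x * 2^n⌋₊ with hj1def
  have hj1 : j1 < 2^n := floor_circRep_lt x n
  set x' := leftPt n j1 with hx'
  have hxmem : x ∈ dyadicArc n j1 := mem_dyadicArc_self x n
  have hx'mem : x' ∈ dyadicArc n j1 := leftPt_mem_arc n j1
  have htn := trunc_nonneg hΔ n
  have h1 : dOf (trunc Δ n) x x' ≤ B := by
    calc dOf (trunc Δ n) x x' ≤ trunc Δ n n j1 := dOf_le_of_mem_arc htn hj1 hxmem hx'mem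
    _ = Δ n j1 := trunc_eq_of_le (le_refl n) j1
    _ ≤ B := hB _ hj1
  obtain ⟨j2, hj2, hx'2, hFx'2⟩ := disp_dyadic hFn (leftPt_dyadic n j1)
  have h2 : dOf (trunc Δ n) x' (Fn x') ≤ B := by
    calc dOf (trunc Δ n) x' (Fn x') ≤ trunc Δ n n j2 := dOf_le_of_mem_arc htn hj2 hx'2 hFx'2
    _ = Δ n j2 := trunc_eq_of_le (le_refl n) j2
    _ ≤ B := hB _ hj2
  have h3 : dOf (trunc Δ n) (Fn x') (Fn x) ≤ B := by
    calc dOf (trunc Δ n) (Fn x') (Fn x) ≤ dOf Δ x' x := hFn.1 x' x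
    _ ≤ Δ n j1 := dOf_le_of_mem_arc (S1_nonneg hΔ) hj1 hx'mem hxmem
    _ ≤ B := hB _ hj1
  calc dOf (trunc Δ n) x (Fn x)
      ≤ dOf (trunc Δ n) x x' + dOf (trunc Δ n) x' (Fn x) := dOf_triangle htn _ _ _
  _ ≤ dOf (trunc Δ n) x x' + (dOf (trunc Δ n) x' (Fn x') + dOf (trunc Δ n) (Fn x') (Fn x)) := by
      linarith [dOf_triangle htn x' (Fn x') (Fn x)]
  _ ≤ 3 * B := by linarith

end CircleAux
namespace CircleAux

/-- The set of dyadic rationals (of the relevant form) in `ℝ`. -/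
def DyR : Set ℝ := ⋃ (m : ℕ), ⋃ (j : ℕ), {((j:ℝ)/2^m)}

lemma DyR_countable : DyR.Countable :=
  Set.countable_iUnion fun _ => Set.countable_iUnion fun _ => Set.countable_singleton _

lemma mem_DyR (m j : ℕ) : ((j:ℝ)/2^m) ∈ DyR := by
  exact Set.mem_iUnion.2 ⟨m, Set.mem_iUnion.2 ⟨j, rfl⟩⟩

lemma mem_DyR' (m j : ℕ) : (((j:ℝ)+1)/2^m) ∈ DyR := by
  have : ((j:ℝ)+1) = ((j+1 : ℕ):ℝ) := by push_cast; ring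
  rw [this]; exact mem_DyR m (j+1)

lemma dIoo_of_not_dyR {m j : ℕ} {z : ℝ} (hz : z ∈ dIcc m j) (hnd : z ∉ DyR) :
    z ∈ Set.Ioo ((j:ℝ)/2^m) (((j:ℝ)+1)/2^m) := by
  refine ⟨lt_of_le_of_ne hz.1 ?_, lt_of_le_of_ne hz.2 ?_⟩
  · intro h; exact hnd (h ▸ mem_DyR m j)
  · intro h; exact hnd (h ▸ mem_DyR' m j)

lemma zr_in_Ioo01 {n j : ℕ} (hj : j < 2^n) {z : ℝ}
    (hz : z ∈ Set.Ioo ((j:ℝ)/2^n) (((j:ℝ)+1)/2^n)) : z ∈ Set.Ioo (0:ℝ) 1 := by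
  have hpn : (0:ℝ) < 2^n := by positivity
  constructor
  · have : (0:ℝ) ≤ (j:ℝ)/2^n := by positivity
    linarith [hz.1]
  · have hle : ((j:ℝ)+1) ≤ 2^n := by exact_mod_cast hj
    have : ((j:ℝ)+1)/2^n ≤ 1 := by rw [div_le_one hpn]; exact hle
    linarith [hz.2]

lemma dIcc_subset_Icc01 {m j : ℕ} (hj : j < 2^m) : dIcc m j ⊆ Set.Icc (0:ℝ) 1 := by
  intro r hr
  have hpm : (0:ℝ) < 2^m := by positivity
  constructor
  · have : (0:ℝ) ≤ (j:ℝ)/2^m := by positivity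
    linarith [hr.1]
  · have hle : ((j:ℝ)+1) ≤ 2^m := by exact_mod_cast hj
    have : ((j:ℝ)+1)/2^m ≤ 1 := by rw [div_le_one hpm]; exact hle
    linarith [hr.2]

/-- The set of (at most 3) possible indices of level-`n` dyadic arcs containing a point. -/
lemma arcs_at_point {w : AddCircle (1:ℝ)} {n j : ℕ} (hj : j < 2^n)
    (hw : w ∈ dyadicArc n j) :
    j = ⌊circRep w * 2^n⌋₊ ∨ j = ⌊circRep w * 2^n⌋₊ - 1 ∨ j = 2^n - 1 := by
  obtain ⟨rr, hrr, hmk⟩ := hw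
  set t := circRep w with htdef
  have htm := circRep_mem w
  have hpn : (0:ℝ) < 2^n := by positivity
  have hrr01 : rr ∈ Set.Icc (0:ℝ) 1 := dIcc_subset_Icc01 hj hrr
  have hmk' : ((rr : ℝ) : AddCircle (1:ℝ)) = ((t : ℝ) : AddCircle (1:ℝ)) := by
    have h1 : ((rr : ℝ) : AddCircle (1:ℝ)) = w := hmk
    rw [h1, htdef, mk_circRep]
  obtain ⟨z, hzz⟩ := coe_eq_coe_iff.1 hmk'
  have hz1 : (z:ℝ) ≤ 1 := by rw [← hzz]; linarith [hrr01.1, hrr01.2, htm.1, htm.2]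
  have hz2 : (-1:ℝ) < (z:ℝ) := by rw [← hzz]; linarith [hrr01.1, hrr01.2, htm.1, htm.2]
  have hz1' : z ≤ 1 := by exact_mod_cast hz1
  have hz2' : (-1:ℤ) < z := by exact_mod_cast hz2
  interval_cases z
  · -- z = 0 : rr = t
    have hrt : rr = t := by
      have : rr - t = ((0:ℤ):ℝ) := hzz
      push_cast at this; linarith
    have h1 : (j:ℝ) ≤ t * 2^n := by
      have := hrr.1; rw [div_le_iff₀ hpn] at this; linarith [hrt ▸ this]
    have h2 : t * 2^n ≤ (j:ℝ) + 1 := by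
      have := hrr.2; rw [le_div_iff₀ hpn] at this; linarith [hrt ▸ this]
    have hf1 : j ≤ ⌊t * 2^n⌋₊ := Nat.le_floor h1
    have hf2 : ⌊t * 2^n⌋₊ ≤ j + 1 := by
      calc ⌊t * 2^n⌋₊ ≤ ⌊((j:ℝ)+1)⌋₊ := Nat.floor_le_floor h2
      _ = j + 1 := by
          rw [show ((j:ℝ)+1) = ((j+1 : ℕ):ℝ) by push_cast; ring, Nat.floor_natCast]
    omega
  · -- z = 1 : rr = t + 1, so rr = 1, t = 0
    have hrt : rr = t + 1 := by
      have : rr - t = ((1:ℤ):ℝ) := hzz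
      push_cast at this; linarith
    have h1 : (j:ℝ) ≤ 2^n := by
      have := hrr.1; rw [div_le_iff₀ hpn] at this
      have ht0 : 0 ≤ t := htm.1
      nlinarith [hrr01.2]
    have h2 : (2:ℝ)^n ≤ (j:ℝ) + 1 := by
      have := hrr.2; rw [le_div_iff₀ hpn] at this
      have ht0 : 0 ≤ t := htm.1
      nlinarith
    have e1 : j ≤ 2^n := by exact_mod_cast h1
    have e2 : 2^n ≤ j + 1 := by exact_mod_cast h2
    right; right; omega

end CircleAux
namespace CircleAux

lemma coe_mem_dyadicArc {z : ℝ} (hz : z ∈ Set.Ioo (0:ℝ) 1) {m j : ℕ} (hj : j < 2^m)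
    (h : ((z : ℝ) : AddCircle (1:ℝ)) ∈ dyadicArc m j) : z ∈ dIcc m j := by
  obtain ⟨rr, hrr, hmk⟩ := h
  have hmk' : ((rr : ℝ) : AddCircle (1:ℝ)) = ((z : ℝ) : AddCircle (1:ℝ)) := hmk
  have := coe_eq_coe_of_mem (dIcc_subset_Icc01 hj hrr) hz hmk'
  rwa [← this]

lemma card_le_three {ι : Type*} [DecidableEq ι] {S : Finset ι} {f : ι → ℕ}
    {w : AddCircle (1:ℝ)} {n : ℕ}
    (hval : ∀ k ∈ S, f k < 2^n) (hmem : ∀ k ∈ S, w ∈ dyadicArc n (f k))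
    (hinj : Set.InjOn f ↑S) : S.card ≤ 3 := by
  classical
  have h1 : S.card = (S.image f).card := (Finset.card_image_of_injOn hinj).symm
  have h2 : S.image f ⊆ {⌊circRep w * 2^n⌋₊, ⌊circRep w * 2^n⌋₊ - 1, 2^n - 1} := by
    intro j hj
    obtain ⟨k, hk, rfl⟩ := Finset.mem_image.1 hj
    have := arcs_at_point (hval k hk) (hmem k hk)
    simp only [Finset.mem_insert, Finset.mem_singleton]
    tauto
  calc S.card = (S.image f).card := h1
  _ ≤ ({⌊circRep w * 2^n⌋₊, ⌊circRep w * 2^n⌋₊ - 1, 2^n - 1} : Finset ℕ).card :=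
      Finset.card_le_card h2
  _ ≤ 3 := by
      apply le_trans (Finset.card_insert_le _ _)
      have := Finset.card_insert_le (⌊circRep w * 2^n⌋₊ - 1) ({2^n - 1} : Finset ℕ)
      simp at this ⊢
      omega

open MeasureTheory in
lemma exists_nondyadic_not_covered {n jA : ℕ} {ι : Type*} {S : Finset ι}
    {lv idx : ι → ℕ}
    (hsum : ∑ k ∈ S, (1:ℝ)/2^(lv k) < 1/2^n) :
    ∃ z : ℝ, z ∈ Set.Ioo ((jA:ℝ)/2^n) (((jA:ℝ)+1)/2^n) ∧ z ∉ DyR ∧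
      ∀ k ∈ S, z ∉ Set.Ioc ((idx k:ℝ)/2^(lv k)) (((idx k:ℝ)+1)/2^(lv k)) := by
  classical
  set lo := (jA:ℝ)/2^n with hlo
  set hi := ((jA:ℝ)+1)/2^n with hhi
  have hIoc : ¬ (Set.Ioc lo hi ⊆
      (⋃ k ∈ S, Set.Ioc ((idx k:ℝ)/2^(lv k)) (((idx k:ℝ)+1)/2^(lv k))) ∪ DyR) := by
    intro hsub
    have h1 : volume (Set.Ioc lo hi) = ENNReal.ofReal (1/2^n) := by
      rw [Real.volume_Ioc]
      congr 1
      rw [hlo, hhi]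
      field_simp
      ring
    have h2 : volume (⋃ k ∈ S, Set.Ioc ((idx k:ℝ)/2^(lv k)) (((idx k:ℝ)+1)/2^(lv k)))
        ≤ ∑ k ∈ S, ENNReal.ofReal ((1:ℝ)/2^(lv k)) := by
      apply le_trans (measure_biUnion_finset_le _ _)
      apply Finset.sum_le_sum
      intro k _
      rw [Real.volume_Ioc]
      apply le_of_eq
      congr 1
      field_simp
      ring
    have h3 : volume DyR = 0 := Set.Countable.measure_zero DyR_countable _
    have h4 : volume (Set.Ioc lo hi)
        ≤ ∑ k ∈ S, ENNReal.ofReal ((1:ℝ)/2^(lv k)) := by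
      calc volume (Set.Ioc lo hi)
          ≤ volume ((⋃ k ∈ S, Set.Ioc ((idx k:ℝ)/2^(lv k)) (((idx k:ℝ)+1)/2^(lv k))) ∪ DyR) :=
            measure_mono hsub
      _ ≤ volume (⋃ k ∈ S, Set.Ioc ((idx k:ℝ)/2^(lv k)) (((idx k:ℝ)+1)/2^(lv k)))
            + volume DyR := measure_union_le _ _
      _ = volume (⋃ k ∈ S, Set.Ioc ((idx k:ℝ)/2^(lv k)) (((idx k:ℝ)+1)/2^(lv k))) := by
            rw [h3, add_zero]
      _ ≤ _ := h2
    rw [h1, ← ENNReal.ofReal_sum_of_nonneg (fun k _ => by positivity)] at h4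
    have h5 : (1:ℝ)/2^n ≤ ∑ k ∈ S, (1:ℝ)/2^(lv k) := by
      have := (ENNReal.ofReal_le_ofReal_iff (by positivity)).1 h4
      exact this
    linarith
  obtain ⟨z, hz1, hz2⟩ := Set.not_subset.1 hIoc
  simp only [Set.mem_union, not_or] at hz2
  refine ⟨z, ⟨hz1.1, lt_of_le_of_ne hz1.2 ?_⟩, hz2.2, ?_⟩
  · intro h
    exact hz2.2 (h ▸ mem_DyR' n jA)
  · intro k hk hmem
    exact hz2.1 (Set.mem_biUnion hk hmem)

end CircleAux
namespace CircleAux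

lemma surgery {Δ : ℕ → ℕ → ℝ} (hΔ : IsS1 Δ) (n : ℕ) {B : ℝ}
    (hB : ∀ i < 2^n, Δ n i ≤ B) (x y : AddCircle (1:ℝ)) :
    dOf Δ x y ≤ dOf (trunc Δ n) x y + 7 * B := by
  classical
  have key : ∀ s ∈ chainSums (trunc Δ n) x y, dOf Δ x y ≤ s + 7 * B := by
    rintro s ⟨N, c, hc, rfl⟩
    set U := ⋃ k, dyadicArc (c k).1 (c k).2 with hU
    set aIdx : Fin (N+1) → ℕ := fun k => (c k).2 / 2^((c k).1 - n) with haIdx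
    have haval : ∀ k, aIdx k < 2^n := fun k => by
      by_cases hk : n ≤ (c k).1
      · exact anc_idx_lt hk (hc.1 k)
      · have : (c k).1 - n = 0 := by omega
        simp only [haIdx, this, pow_zero, Nat.div_one]
        calc (c k).2 < 2^(c k).1 := hc.1 k
        _ ≤ 2^n := Nat.pow_le_pow_right (by norm_num) (by omega)
    have hsubanc : ∀ k, n < (c k).1 →
        dyadicArc (c k).1 (c k).2 ⊆ dyadicArc n (aIdx k) :=
      fun k hk => dyadicArc_subset_anc (le_of_lt hk) _
    set absorbed : Fin (N+1) → Prop := fun k =>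
      ∃ k', (c k').1 ≤ n ∧ dyadicArc n (aIdx k) ⊆ dyadicArc (c k').1 (c k').2
      with habs
    set keep : Fin (N+1) → Prop := fun k =>
      (c k).1 ≤ n ∨ (n < (c k).1 ∧ ¬ absorbed k ∧
        ∀ k', (n < (c k').1 ∧ ¬ absorbed k' ∧ aIdx k' = aIdx k) → k ≤ k') with hkeep
    set r : Fin (N+1) → ℕ × ℕ := fun k => if n < (c k).1 then (n, aIdx k) else c k
      with hr
    have hrval : ∀ k, (r k).2 < 2^(r k).1 := fun k => by
      simp only [hr]
      split
      · exact haval k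
      · exact hc.1 k
    have hrsub : ∀ k, dyadicArc (c k).1 (c k).2 ⊆ dyadicArc (r k).1 (r k).2 := fun k => by
      simp only [hr]
      split
      · next h => exact hsubanc k h
      · exact subset_rfl
    set T := Finset.univ.filter keep with hT
    -- every original arc is inside some kept replaced arc
    have hcov : ∀ k, ∃ k', k' ∈ T ∧
        dyadicArc (c k).1 (c k).2 ⊆ dyadicArc (r k').1 (r k').2 := by
      intro k
      by_cases hdk : n < (c k).1
      · by_cases habk : absorbed k
        · obtain ⟨k', hk'1, hk'2⟩ := habk
          refine ⟨k', Finset.mem_filter.2 ⟨Finset.mem_univ _, Or.inl hk'1⟩, ?_⟩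
          have : dyadicArc (r k').1 (r k').2 = dyadicArc (c k').1 (c k').2 := by
            simp only [hr, if_neg (by omega : ¬ n < (c k').1)]
          rw [this]
          exact subset_trans (hsubanc k hdk) hk'2
        · set S := Finset.univ.filter
            (fun k' => n < (c k').1 ∧ ¬ absorbed k' ∧ aIdx k' = aIdx k) with hS
          have hkS : k ∈ S := Finset.mem_filter.2 ⟨Finset.mem_univ _, hdk, habk, rfl⟩
          have hSne : S.Nonempty := ⟨k, hkS⟩
          set k0 := S.min' hSne with hk0
          obtain ⟨-, hk0d, hk0a, hk0i⟩ := Finset.mem_filter.1 (S.min'_mem hSne)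
          refine ⟨k0, Finset.mem_filter.2 ⟨Finset.mem_univ _, Or.inr ⟨hk0d, hk0a, ?_⟩⟩, ?_⟩
          · intro k' hk'
            apply Finset.min'_le
            rw [hS, Finset.mem_filter]
            exact ⟨Finset.mem_univ _, hk'.1, hk'.2.1, hk'.2.2.trans hk0i⟩
          · have : dyadicArc (r k0).1 (r k0).2 = dyadicArc n (aIdx k) := by
              simp only [hr, hk0, if_pos hk0d, hk0i]
            rw [this]
            exact hsubanc k hdk
      · refine ⟨k, Finset.mem_filter.2 ⟨Finset.mem_univ _, Or.inl (by omega)⟩, ?_⟩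
        exact hrsub k
    have hTne : T.Nonempty := by
      obtain ⟨k', hk', -⟩ := hcov 0
      exact ⟨k', hk'⟩
    -- distinct kept deep arcs have distinct ancestors
    have hdistinct : ∀ k1 ∈ T, ∀ k2 ∈ T, n < (c k1).1 → n < (c k2).1 →
        aIdx k1 = aIdx k2 → k1 = k2 := by
      intro k1 hk1 k2 hk2 hd1 hd2 hai
      rw [hT, Finset.mem_filter] at hk1 hk2
      rcases hk1.2 with h | ⟨-, ha1, hm1⟩
      · omega
      rcases hk2.2 with h | ⟨-, ha2, hm2⟩
      · omega
      exact le_antisymm (hm1 k2 ⟨hd2, ha2, hai.symm⟩) (hm2 k1 ⟨hd1, ha1, hai⟩)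
    -- new chain
    set N' := T.card - 1 with hN'
    have hcard : T.card = N' + 1 := by
      have := Finset.card_pos.2 hTne
      omega
    set e := T.orderIsoOfFin hcard with he
    set c' : Fin (N'+1) → ℕ × ℕ := fun i => r (e i) with hc'
    have hU'eq : (⋃ i, dyadicArc (c' i).1 (c' i).2)
        = ⋃ k ∈ T, dyadicArc (r k).1 (r k).2 := by
      ext w
      simp only [Set.mem_iUnion]
      constructor
      · rintro ⟨i, h⟩
        exact ⟨e i, (e i).2, h⟩
      · rintro ⟨k, hk, h⟩
        refine ⟨e.symm ⟨k, hk⟩, ?_⟩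
        simp only [hc']
        rw [OrderIso.apply_symm_apply]
        exact h
    have hUsub : U ⊆ ⋃ i, dyadicArc (c' i).1 (c' i).2 := by
      rw [hU'eq]
      intro w hw
      rw [hU, Set.mem_iUnion] at hw
      obtain ⟨k, hk⟩ := hw
      obtain ⟨k', hk'T, hk's⟩ := hcov k
      exact Set.mem_biUnion hk'T (hk's hk)
    have hxU : x ∈ U := hc.2.2.1
    have hyU : y ∈ U := hc.2.2.2
    have hUconn : IsConnected U := hc.2.1
    -- connectivity of the new chain
    have hconn : IsConnected (⋃ i, dyadicArc (c' i).1 (c' i).2) := by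
      refine ⟨⟨x, hUsub hxU⟩, ?_⟩
      have heq2 : (⋃ i, dyadicArc (c' i).1 (c' i).2)
          = ⋃₀ ((fun k => dyadicArc (r k).1 (r k).2 ∪ U) '' ↑T) := by
        rw [Set.sUnion_image, hU'eq]
        apply Set.Subset.antisymm
        · intro w hw
          rw [Set.mem_iUnion₂] at hw ⊢
          obtain ⟨k, hk, h⟩ := hw
          exact ⟨k, hk, Or.inl h⟩
        · intro w hw
          rw [Set.mem_iUnion₂] at hw
          obtain ⟨k, hk, h⟩ := hw
          rcases h with h | h
          · exact Set.mem_biUnion hk h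
          · exact hU'eq ▸ hUsub h
      rw [heq2]
      apply isPreconnected_sUnion x
      · rintro s ⟨k, hk, rfl⟩
        exact Or.inr hxU
      · rintro s ⟨k, hk, rfl⟩
        apply IsConnected.isPreconnected
        apply IsConnected.union ?_ (isConnected_dyadicArc _ _) hUconn
        obtain ⟨w, hw⟩ := dyadicArc_nonempty (c k).1 (c k).2
        exact ⟨w, hrsub k hw, Set.mem_iUnion.2 ⟨k, hw⟩⟩
    -- the new chain sum
    have hsum : ∑ i, Δ (c' i).1 (c' i).2 = ∑ k ∈ T, Δ (r k).1 (r k).2 := by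
      rw [← Finset.sum_coe_sort T (fun k => Δ (r k).1 (r k).2)]
      exact Equiv.sum_comp e.toEquiv (fun a => Δ (r a).1 (r a).2)
    -- dOf Δ x y is at most the new chain sum
    have hdle : dOf Δ x y ≤ ∑ k ∈ T, Δ (r k).1 (r k).2 := by
      rw [← hsum]
      apply csInf_le (bddBelow_chainSums (S1_nonneg hΔ) x y)
      exact ⟨N', c', ⟨fun i => hrval (e i), hconn, hUsub hxU, hUsub hyU⟩, rfl⟩
    -- now bound the new chain sum
    have hB0 : 0 ≤ B :=
      le_trans (le_of_lt (hΔ.2.1 n 0 (Nat.pow_pos (by norm_num)))) (hB 0 (Nat.pow_pos (by norm_num)))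
    have hmain : ∑ k ∈ T, Δ (r k).1 (r k).2
        ≤ (∑ k, trunc Δ n (c k).1 (c k).2) + 7 * B := by
      set Tsh := T.filter (fun k => ¬ n < (c k).1) with hTsh
      set Tdp := T.filter (fun k => n < (c k).1) with hTdp
      have hsplitT : ∑ k ∈ T, Δ (r k).1 (r k).2
          = ∑ k ∈ Tdp, Δ (r k).1 (r k).2 + ∑ k ∈ Tsh, Δ (r k).1 (r k).2 :=
        (Finset.sum_filter_add_sum_filter_not T _ _).symm
      have hsh : ∑ k ∈ Tsh, Δ (r k).1 (r k).2
          ≤ ∑ k ∈ Finset.univ.filter (fun k => ¬ n < (c k).1),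
              trunc Δ n (c k).1 (c k).2 := by
        have heqv : ∀ k ∈ Tsh, Δ (r k).1 (r k).2 = trunc Δ n (c k).1 (c k).2 := by
          intro k hk
          have hknd := (Finset.mem_filter.1 hk).2
          simp only [hr, if_neg hknd]
          rw [trunc_eq_of_le (by omega)]
        rw [Finset.sum_congr rfl heqv]
        apply Finset.sum_le_sum_of_subset_of_nonneg
        · intro k hk
          exact Finset.mem_filter.2 ⟨Finset.mem_univ _, (Finset.mem_filter.1 hk).2⟩
        · intro k _ _
          exact trunc_nonneg hΔ n _ _ (hc.1 k)
      have hdpval : ∀ k ∈ Tdp, Δ (r k).1 (r k).2 = Δ n (aIdx k) := by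
        intro k hk
        simp only [hr, if_pos (Finset.mem_filter.1 hk).2]
      set cls : Fin (N+1) → Finset (Fin (N+1)) := fun k =>
        Finset.univ.filter (fun k' => n < (c k').1 ∧ aIdx k' = aIdx k) with hcls
      set good : Fin (N+1) → Prop := fun k =>
        Δ n (aIdx k) ≤ ∑ k' ∈ cls k, trunc Δ n (c k').1 (c k').2 with hgood
      set Tg := Tdp.filter good with hTg
      set Tb := Tdp.filter (fun k => ¬ good k) with hTb
      have hsplitD : ∑ k ∈ Tdp, Δ (r k).1 (r k).2
          = ∑ k ∈ Tg, Δ (r k).1 (r k).2 + ∑ k ∈ Tb, Δ (r k).1 (r k).2 :=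
        (Finset.sum_filter_add_sum_filter_not Tdp good _).symm
      have hgoodb : ∑ k ∈ Tg, Δ (r k).1 (r k).2
          ≤ ∑ k ∈ Finset.univ.filter (fun k => n < (c k).1),
              trunc Δ n (c k).1 (c k).2 := by
        have hdisj : Set.PairwiseDisjoint ↑Tg cls := by
          intro k1 hk1 k2 hk2 hne
          have hk1' := Finset.mem_filter.1 (Finset.mem_coe.1 hk1)
          have hk2' := Finset.mem_filter.1 (Finset.mem_coe.1 hk2)
          have hk1T := (Finset.mem_filter.1 hk1'.1).1
          have hk2T := (Finset.mem_filter.1 hk2'.1).1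
          have hd1 := (Finset.mem_filter.1 hk1'.1).2
          have hd2 := (Finset.mem_filter.1 hk2'.1).2
          have hane : aIdx k1 ≠ aIdx k2 := by
            intro h
            exact hne (hdistinct k1 hk1T k2 hk2T hd1 hd2 h)
          apply Finset.disjoint_left.2
          intro k' h1 h2
          have e1 := (Finset.mem_filter.1 h1).2.2
          have e2 := (Finset.mem_filter.1 h2).2.2
          exact hane (e1 ▸ e2 ▸ rfl)
        calc ∑ k ∈ Tg, Δ (r k).1 (r k).2
            ≤ ∑ k ∈ Tg, ∑ k' ∈ cls k, trunc Δ n (c k').1 (c k').2 := by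
              apply Finset.sum_le_sum
              intro k hk
              rw [hdpval k (Finset.mem_filter.1 hk).1]
              exact (Finset.mem_filter.1 hk).2
        _ = ∑ k' ∈ Tg.biUnion cls, trunc Δ n (c k').1 (c k').2 :=
              (Finset.sum_biUnion hdisj).symm
        _ ≤ _ := by
              apply Finset.sum_le_sum_of_subset_of_nonneg
              · intro k' hk'
                obtain ⟨k, hk, hk'c⟩ := Finset.mem_biUnion.1 hk'
                exact Finset.mem_filter.2
                  ⟨Finset.mem_univ _, ((Finset.mem_filter.1 hk'c).2).1⟩
              · intro k _ _
                exact trunc_nonneg hΔ n _ _ (hc.1 k)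
      have hTbdata : ∀ k ∈ Tb, k ∈ T ∧ n < (c k).1 ∧ ¬ absorbed k ∧ ¬ good k := by
        intro k hk
        have h1 := Finset.mem_filter.1 hk
        have h2 := Finset.mem_filter.1 h1.1
        refine ⟨h2.1, h2.2, ?_, h1.2⟩
        rcases (Finset.mem_filter.1 h2.1).2 with h | ⟨-, h, -⟩
        · omega
        · exact h
      -- For every bad index there is a non-dyadic point of its ancestor arc avoiding U
      have hbz : ∀ k ∈ Tb, ∃ zr : ℝ,
          zr ∈ Set.Ioo ((aIdx k:ℝ)/2^n) (((aIdx k:ℝ)+1)/2^n) ∧ zr ∉ DyR ∧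
          ((zr : ℝ) : AddCircle (1:ℝ)) ∉ U := by
        intro k hk
        obtain ⟨hkT, hdk, hnabs, hng⟩ := hTbdata k hk
        have hD : 0 < Δ n (aIdx k) := hΔ.2.1 n _ (haval k)
        have hlt : ∑ k' ∈ cls k, trunc Δ n (c k').1 (c k').2 < Δ n (aIdx k) := by
          have := hng
          rw [hgood] at this
          exact not_le.1 this
        have hterm : ∀ k' ∈ cls k, trunc Δ n (c k').1 (c k').2
            = Δ n (aIdx k) * (2^n * ((1:ℝ)/2^((c k').1))) := by
          intro k' hk'
          have hm := Finset.mem_filter.1 hk'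
          have hd' : n < (c k').1 := hm.2.1
          have he' : aIdx k' = aIdx k := hm.2.2
          have he2 : (c k').2 / 2^((c k').1 - n) = aIdx k := by
            rw [← he', haIdx]
          unfold trunc
          rw [if_neg (by omega), he2]
          have hps : (2:ℝ)^((c k').1) = 2^n * 2^((c k').1 - n) :=
            pow_split (le_of_lt hd')
          have hp1 : (0:ℝ) < 2^((c k').1 - n) := by positivity
          have hp2 : (0:ℝ) < 2^((c k').1) := by positivity
          field_simp
          nlinarith [hps]
        have hsum : ∑ k' ∈ cls k, (1:ℝ)/2^((c k').1) < 1/2^n := by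
          rw [Finset.sum_congr rfl hterm, ← Finset.mul_sum, ← Finset.mul_sum] at hlt
          have hpn : (0:ℝ) < 2^n := by positivity
          by_contra hcon
          push_neg at hcon
          have h1 : (1:ℝ) ≤ 2^n * ∑ k' ∈ cls k, (1:ℝ)/2^((c k').1) := by
            have := mul_le_mul_of_nonneg_left hcon (le_of_lt hpn)
            rwa [mul_one_div, div_self (ne_of_gt hpn)] at this
          nlinarith [hD, h1, hlt]
        obtain ⟨zr, hz1, hz2, hz3⟩ := exists_nondyadic_not_covered
          (jA := aIdx k) (S := cls k)
          (lv := fun k' => (c k').1) (idx := fun k' => (c k').2) hsum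
        refine ⟨zr, hz1, hz2, ?_⟩
        intro hzU2
        rw [hU, Set.mem_iUnion] at hzU2
        obtain ⟨k'', hk''⟩ := hzU2
        have hz01 := zr_in_Ioo01 (haval k) hz1
        have hzr_icc : zr ∈ dIcc (c k'').1 (c k'').2 :=
          coe_mem_dyadicArc hz01 (hc.1 k'') hk''
        have hzIoo'' := dIoo_of_not_dyR hzr_icc hz2
        by_cases hdeep'' : n < (c k'').1
        · have hanc : zr ∈ dIcc n ((c k'').2 / 2^((c k'').1 - n)) :=
            dIcc_subset_anc (le_of_lt hdeep'') _ hzr_icc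
          have hancIoo := dIoo_of_not_dyR hanc hz2
          have heq : (c k'').2 / 2^((c k'').1 - n) = aIdx k := dIoo_disjoint hancIoo hz1
          have heq' : aIdx k'' = aIdx k := by rw [haIdx]; exact heq
          have hk''cls : k'' ∈ cls k :=
            Finset.mem_filter.2 ⟨Finset.mem_univ _, hdeep'', heq'⟩
          exact hz3 k'' hk''cls ⟨hzIoo''.1, hzr_icc.2⟩
        · have hle'' : (c k'').1 ≤ n := by omega
          have hsubq : dIcc n (aIdx k) ⊆ dIcc (c k'').1 (aIdx k / 2^(n - (c k'').1)) :=
            dIcc_subset_anc hle'' _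
          have hzq : zr ∈ dIcc (c k'').1 (aIdx k / 2^(n - (c k'').1)) :=
            hsubq (Set.Ioo_subset_Icc_self hz1)
          have hzqIoo := dIoo_of_not_dyR hzq hz2
          have heqq : aIdx k / 2^(n - (c k'').1) = (c k'').2 :=
            dIoo_disjoint hzqIoo hzIoo''
          apply hnabs
          refine ⟨k'', hle'', ?_⟩
          rw [← heqq]
          exact dyadicArc_subset_anc hle'' _
      have hbadcard : Tb.card ≤ 7 := by
        rcases Finset.eq_empty_or_nonempty Tb with hTbe | hTbne
        · rw [hTbe]; simp
        choose! zfun hzIoo hzDy hzU2 using hbz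
        set k1 := Tb.min' hTbne with hk1
        have hk1Tb : k1 ∈ Tb := Tb.min'_mem hTbne
        set ζ := zfun k1 with hζ
        set z1 : AddCircle (1:ℝ) := ((ζ : ℝ) : AddCircle (1:ℝ)) with hz1def
        have hz1notin : ∀ k ∈ Tb, k ≠ k1 → z1 ∉ dyadicArc n (aIdx k) := by
          intro k hk hne hmem
          have h01 := zr_in_Ioo01 (haval k1) (hzIoo k1 hk1Tb)
          have hicc := coe_mem_dyadicArc h01 (haval k) hmem
          have hioo := dIoo_of_not_dyR hicc (hzDy k1 hk1Tb)
          have heqa : aIdx k = aIdx k1 := dIoo_disjoint hioo (hzIoo k1 hk1Tb)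
          obtain ⟨hkT, hdk, -, -⟩ := hTbdata k hk
          obtain ⟨hk1T, hdk1, -, -⟩ := hTbdata k1 hk1Tb
          exact hne (hdistinct k hkT k1 hk1T hdk hdk1 heqa)
        set φ : AddCircle (1:ℝ) → ℝ := fun w => ((AddCircle.equivIoc 1 ζ) w : ℝ) with hφ
        have hφinj : Function.Injective φ := fun u v huv =>
          (AddCircle.equivIoc 1 ζ).injective (Subtype.ext huv)
        have hφcont : ∀ S : Set (AddCircle (1:ℝ)), z1 ∉ S → ContinuousOn φ S := by
          intro S hS w hw
          apply ContinuousAt.continuousWithinAt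
          apply ContinuousAt.comp continuousAt_subtype_val
          apply AddCircle.continuousAt_equivIoc 1 ζ
          intro hwz
          rw [hwz] at hw
          exact hS hw
        set Vs := φ '' U with hVs
        have hVconn : IsPreconnected Vs :=
          hUconn.isPreconnected.image φ (hφcont U (hzU2 k1 hk1Tb))
        have hVord : Vs.OrdConnected := hVconn.ordConnected
        have hVne : Vs.Nonempty := ⟨φ x, x, hxU, rfl⟩
        set av := sInf Vs with hav
        set bv := sSup Vs with hbv
        have hkey : ∀ k ∈ Tb, k ≠ k1 →
            av ∈ φ '' dyadicArc n (aIdx k) ∨ bv ∈ φ '' dyadicArc n (aIdx k) := by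
          intro k hk hne
          obtain ⟨hkT, hdk, -, -⟩ := hTbdata k hk
          have hzA : z1 ∉ dyadicArc n (aIdx k) := hz1notin k hk hne
          have hIord : (φ '' dyadicArc n (aIdx k)).OrdConnected :=
            ((isConnected_dyadicArc n (aIdx k)).isPreconnected.image φ
              (hφcont _ hzA)).ordConnected
          obtain ⟨u, hu⟩ := dyadicArc_nonempty (c k).1 (c k).2
          have huA : u ∈ dyadicArc n (aIdx k) := hsubanc k hdk hu
          have huU : u ∈ U := Set.mem_iUnion.2 ⟨k, hu⟩
          have hvV : φ u ∈ Vs := ⟨u, huU, rfl⟩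
          have hvI : φ u ∈ φ '' dyadicArc n (aIdx k) := ⟨u, huA, rfl⟩
          set zk : AddCircle (1:ℝ) := ((zfun k : ℝ) : AddCircle (1:ℝ)) with hzk
          have hzkA : zk ∈ dyadicArc n (aIdx k) :=
            ⟨zfun k, Set.Ioo_subset_Icc_self (hzIoo k hk), rfl⟩
          have hwI : φ zk ∈ φ '' dyadicArc n (aIdx k) := ⟨zk, hzkA, rfl⟩
          have hwnV : φ zk ∉ Vs := by
            rintro ⟨u', hu', he'⟩
            have : u' = zk := hφinj he'
            rw [this] at hu'
            exact hzU2 k hk hu'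
          rcases lt_trichotomy (φ zk) (φ u) with hlt | heq | hgt
          · left
            have hlb : ∀ v' ∈ Vs, φ zk ≤ v' := by
              intro v' hv'
              by_contra hlt'
              push_neg at hlt'
              exact hwnV (hVord.out hv' hvV ⟨le_of_lt hlt', le_of_lt hlt⟩)
            have h1 : φ zk ≤ av := le_csInf hVne hlb
            have h2 : av ≤ φ u := csInf_le ⟨φ zk, hlb⟩ hvV
            exact hIord.out hwI hvI ⟨h1, h2⟩
          · exact absurd hvV (heq ▸ hwnV)
          · right
            have hub : ∀ v' ∈ Vs, v' ≤ φ zk := by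
              intro v' hv'
              by_contra hlt'
              push_neg at hlt'
              exact hwnV (hVord.out hvV hv' ⟨le_of_lt hgt, le_of_lt hlt'⟩)
            have h1 : bv ≤ φ zk := csSup_le hVne hub
            have h2 : φ u ≤ bv := le_csSup ⟨φ zk, hub⟩ hvV
            exact hIord.out hvI hwI ⟨h2, h1⟩
        set Sa := Tb.filter (fun k => av ∈ φ '' dyadicArc n (aIdx k)) with hSa
        set Sb := Tb.filter (fun k => bv ∈ φ '' dyadicArc n (aIdx k)) with hSb
        have hsubTb : Tb ⊆ insert k1 (Sa ∪ Sb) := by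
          intro k hk
          by_cases hkk : k = k1
          · rw [hkk]; exact Finset.mem_insert_self _ _
          · rcases hkey k hk hkk with h | h
            · exact Finset.mem_insert.2 (Or.inr
                (Finset.mem_union_left _ (Finset.mem_filter.2 ⟨hk, h⟩)))
            · exact Finset.mem_insert.2 (Or.inr
                (Finset.mem_union_right _ (Finset.mem_filter.2 ⟨hk, h⟩)))
        have hinjS : ∀ S' : Finset (Fin (N+1)), S' ⊆ Tb → Set.InjOn aIdx ↑S' := by
          intro S' hS' k hkm k' hk'm he
          obtain ⟨hkT, hdk, -, -⟩ := hTbdata k (hS' hkm)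
          obtain ⟨hk'T, hdk', -, -⟩ := hTbdata k' (hS' hk'm)
          exact hdistinct k hkT k' hk'T hdk hdk' he
        have hSacard : Sa.card ≤ 3 := by
          rcases Finset.eq_empty_or_nonempty Sa with he | ⟨k0, hk0⟩
          · rw [he]; simp
          · obtain ⟨p, hpA, hpphi⟩ := (Finset.mem_filter.1 hk0).2
            apply card_le_three (f := aIdx) (w := p) (n := n)
            · intro k _; exact haval k
            · intro k hk
              obtain ⟨p', hp'A, hp'phi⟩ := (Finset.mem_filter.1 hk).2
              have : p' = p := hφinj (hp'phi.trans hpphi.symm)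
              rwa [← this]
            · exact hinjS Sa (Finset.filter_subset _ _)
        have hSbcard : Sb.card ≤ 3 := by
          rcases Finset.eq_empty_or_nonempty Sb with he | ⟨k0, hk0⟩
          · rw [he]; simp
          · obtain ⟨p, hpA, hpphi⟩ := (Finset.mem_filter.1 hk0).2
            apply card_le_three (f := aIdx) (w := p) (n := n)
            · intro k _; exact haval k
            · intro k hk
              obtain ⟨p', hp'A, hp'phi⟩ := (Finset.mem_filter.1 hk).2
              have : p' = p := hφinj (hp'phi.trans hpphi.symm)
              rwa [← this]
            · exact hinjS Sb (Finset.filter_subset _ _)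
        calc Tb.card ≤ (insert k1 (Sa ∪ Sb)).card := Finset.card_le_card hsubTb
        _ ≤ (Sa ∪ Sb).card + 1 := Finset.card_insert_le _ _
        _ ≤ Sa.card + Sb.card + 1 := by linarith [Finset.card_union_le Sa Sb]
        _ ≤ 7 := by omega
      have hbadb : ∑ k ∈ Tb, Δ (r k).1 (r k).2 ≤ 7 * B := by
        have hble : ∀ k ∈ Tb, Δ (r k).1 (r k).2 ≤ B := by
          intro k hk
          rw [hdpval k (Finset.mem_filter.1 hk).1]
          exact hB _ (haval k)
        calc ∑ k ∈ Tb, Δ (r k).1 (r k).2 ≤ Tb.card • B :=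
              Finset.sum_le_card_nsmul _ _ _ hble
        _ = (Tb.card : ℝ) * B := nsmul_eq_mul _ _
        _ ≤ 7 * B := by
            apply mul_le_mul_of_nonneg_right _ hB0
            exact_mod_cast hbadcard
      have htot : ∑ k ∈ Finset.univ.filter (fun k => n < (c k).1),
            trunc Δ n (c k).1 (c k).2
          + ∑ k ∈ Finset.univ.filter (fun k => ¬ n < (c k).1),
            trunc Δ n (c k).1 (c k).2
          = ∑ k, trunc Δ n (c k).1 (c k).2 := Finset.sum_filter_add_sum_filter_not _ _ _
      linarith
    linarith
  have h2 : dOf Δ x y - 7*B ≤ dOf (trunc Δ n) x y := by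
    apply le_csInf (chainSums_nonempty _ x y)
    intro s hs
    linarith [key s hs]
  linarith

end CircleAux
/-- There exists `N*` such that for all `n ≥ N*`, `diam_Δ(W) ≤ diam_n(V_n) + δ`. -/
theorem ddiam_W_le_ddiam_V_add_delta
    (Δ : ℕ → ℕ → ℝ) (hΔ : IsS1 Δ)
    (F : ℕ → AddCircle (1 : ℝ) → AddCircle (1 : ℝ)) (hF : ∀ m : ℕ, IsLimitMap Δ m (F m))
    (δ : ℝ) (M : ℕ) (hM : 3 ≤ M)
    (hδ₁ : 1 / 2 ^ (M + 1) ≤ δ) (hδ₂ : δ < 1 / 2 ^ M)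
    (j : ℕ) (hj : j < 2 ^ M) (H : Set (AddCircle (1 : ℝ)))
    (hH : H = dyadicArc M j ∪ dyadicArc M ((j + 1) % 2 ^ M))
    (W : Set (AddCircle (1 : ℝ))) (hW : DComp (dOf Δ) δ (F 0 ⁻¹' H) W)
    (V : ℕ → Set (AddCircle (1 : ℝ))) (hV0 : V 0 = H)
    (hV : ∀ n : ℕ, DComp (dOf (trunc Δ (n + 1))) δ (Fchain Δ 0 n ⁻¹' H) (V (n + 1)) ∧
      F (n + 1) '' W ⊆ V (n + 1))
    :
    ∃ Nstar : ℕ, ∀ n ≥ Nstar, ddiam (dOf Δ) W ≤ ddiam (dOf (trunc Δ n)) (V n) + δ := by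
  classical
  have hδpos : 0 < δ := lt_of_lt_of_le (by positivity) hδ₁
  set β := δ/16 with hβ
  have hβpos : 0 < β := by positivity
  obtain ⟨N0, hN0⟩ := hΔ.2.2.2 β hβpos
  refine ⟨max N0 1, fun n hn => ?_⟩
  have hnN0 : N0 ≤ n := le_trans (le_max_left _ _) hn
  have hn1 : 1 ≤ n := le_trans (le_max_right _ _) hn
  have hBn : ∀ i < 2^n, Δ n i ≤ β := fun i hi => le_of_lt (hN0 n hnN0 i hi)
  obtain ⟨hVcomp, hFW⟩ := hV (n-1)
  have hn' : n - 1 + 1 = n := by omega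
  rw [hn'] at hVcomp hFW
  have htn := CircleAux.trunc_nonneg hΔ n
  have hbdd : ∀ S : Set (AddCircle (1:ℝ)),
      BddAbove {r | ∃ a ∈ S, ∃ b ∈ S, r = dOf (trunc Δ n) a b} := by
    intro S
    refine ⟨1, ?_⟩
    rintro r ⟨a, ha, b, hb, rfl⟩
    calc dOf (trunc Δ n) a b ≤ trunc Δ n 0 0 := CircleAux.dOf_le_zero_zero htn a b
    _ = 1 := CircleAux.trunc_zero_zero hΔ n
  have hVd0 : 0 ≤ ddiam (dOf (trunc Δ n)) (V n) := by
    rcases Set.eq_empty_or_nonempty (V n) with he | ⟨v0, hv0⟩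
    · rw [ddiam, he]
      have he2 : {r | ∃ x ∈ (∅ : Set (AddCircle (1:ℝ))), ∃ y ∈ (∅ : Set (AddCircle (1:ℝ))),
          r = dOf (trunc Δ n) x y} = ∅ := by simp
      rw [he2, Real.sSup_empty]
    · have hmem : dOf (trunc Δ n) v0 v0
          ∈ {r | ∃ a ∈ V n, ∃ b ∈ V n, r = dOf (trunc Δ n) a b} := ⟨v0, hv0, v0, hv0, rfl⟩
      calc (0:ℝ) ≤ dOf (trunc Δ n) v0 v0 := CircleAux.dOf_nonneg htn _ _
      _ ≤ ddiam (dOf (trunc Δ n)) (V n) := le_csSup (hbdd (V n)) hmem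
  rcases Set.eq_empty_or_nonempty W with hWe | ⟨w0, hw0⟩
  · rw [ddiam, hWe]
    have he2 : {r | ∃ x ∈ (∅ : Set (AddCircle (1:ℝ))), ∃ y ∈ (∅ : Set (AddCircle (1:ℝ))),
        r = dOf Δ x y} = ∅ := by simp
    rw [he2, Real.sSup_empty]
    linarith
  · rw [ddiam]
    have hmem0 : dOf Δ w0 w0 ∈ {r | ∃ a ∈ W, ∃ b ∈ W, r = dOf Δ a b} :=
      ⟨w0, hw0, w0, hw0, rfl⟩
    apply csSup_le ⟨dOf Δ w0 w0, hmem0⟩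
    rintro r ⟨x, hx, y, hy, rfl⟩
    have hFn := hF n
    have hd1 : dOf Δ x y ≤ dOf (trunc Δ n) x y + 7*β := CircleAux.surgery hΔ n hBn x y
    have hd2 : dOf (trunc Δ n) x y
        ≤ dOf (trunc Δ n) x (F n x) + dOf (trunc Δ n) (F n x) y :=
      CircleAux.dOf_triangle htn _ _ _
    have hd3 : dOf (trunc Δ n) (F n x) y
        ≤ dOf (trunc Δ n) (F n x) (F n y) + dOf (trunc Δ n) (F n y) y :=
      CircleAux.dOf_triangle htn _ _ _
    have hdispx : dOf (trunc Δ n) x (F n x) ≤ 3*β :=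
      CircleAux.disp_bound hΔ hFn hBn x
    have hdispy : dOf (trunc Δ n) (F n y) y ≤ 3*β := by
      rw [CircleAux.dOf_symm]
      exact CircleAux.disp_bound hΔ hFn hBn y
    have hmemx : F n x ∈ V n := hFW ⟨x, hx, rfl⟩
    have hmemy : F n y ∈ V n := hFW ⟨y, hy, rfl⟩
    have hdV : dOf (trunc Δ n) (F n x) (F n y) ≤ ddiam (dOf (trunc Δ n)) (V n) :=
      le_csSup (hbdd (V n)) ⟨F n x, hmemx, F n y, hmemy, rfl⟩
    have hfin : (13:ℝ) * β ≤ δ := by rw [hβ]; linarith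
    calc dOf Δ x y ≤ dOf (trunc Δ n) (F n x) (F n y) + 13*β := by linarith
    _ ≤ ddiam (dOf (trunc Δ n)) (V n) + δ := by linarith
end
end
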